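/- arXiv:2410.04504 — 3 statements merged into one kernel-verified Lean document; each statement's English description precedes it below -/
import Mathlib

section
/- Let ρ_1,…,ρ_k be density matrices on ℂ^d, and let C(ρ) = Σ_j E_j† ρ E_j be a quantum channel given by matrices E_j with Σ_j E_j E_j† = I. Then q_re({C(ρ_x)}) ≤ q_re({ρ_x}). -/
open Matrix Filter
open scoped Kronecker Classical ComplexOrder

noncomputable section

/-- Loewner order: `loewnerLE A B` iff `B - A` is positive semidefinite. -/
def loewnerLE {n : Type*} [Fintype n] (A B : Matrix n n ℂ) : Prop := (B - A).PosSemidef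

/-- A density matrix: positive semidefinite with unit trace. -/
def IsDensity {n : Type*} [Fintype n] (ρ : Matrix n n ℂ) : Prop := ρ.PosSemidef ∧ ρ.trace = 1

/-- Real power of a Hermitian matrix, taken on its support (zero eigenvalues map to zero);
junk value `0` on non-Hermitian input. -/
def mpow {n : Type*} [Fintype n] [DecidableEq n] (A : Matrix n n ℂ) (r : ℝ) : Matrix n n ℂ :=
  if hA : A.IsHermitian then
    (hA.eigenvectorUnitary : Matrix n n ℂ) *
      Matrix.diagonal (fun i =>
        (((if hA.eigenvalues i = 0 then (0:ℝ) else hA.eigenvalues i ^ r) : ℝ) : ℂ)) *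
      (star (hA.eigenvectorUnitary : Matrix n n ℂ))
  else 0

/-- Matrix logarithm of a Hermitian matrix, taken on its support. -/
def mlog {n : Type*} [Fintype n] [DecidableEq n] (A : Matrix n n ℂ) : Matrix n n ℂ :=
  if hA : A.IsHermitian then
    (hA.eigenvectorUnitary : Matrix n n ℂ) *
      Matrix.diagonal (fun i => ((Real.log (hA.eigenvalues i) : ℝ) : ℂ)) *
      (star (hA.eigenvectorUnitary : Matrix n n ℂ))
  else 0

/-- Support (range) inclusion for matrices. -/
def suppLE {n : Type*} [Fintype n] (A B : Matrix n n ℂ) : Prop :=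
  LinearMap.range A.mulVecLin ≤ LinearMap.range B.mulVecLin

/-- Finite part of the extended sandwiched Rényi divergence:
`(1/(α-1)) ln ‖σ^{(1-α)/(2α)} ρ σ^{(1-α)/(2α)}‖_α^α` with `‖γ‖_α^α = tr (γ†γ)^{α/2}`. -/
def sandwichedRenyiReal {n : Type*} [Fintype n] [DecidableEq n] (α : ℝ)
    (ρ σ : Matrix n n ℂ) : ℝ :=
  (α - 1)⁻¹ * Real.log
    (mpow ((mpow σ ((1-α)/(2*α)) * ρ * mpow σ ((1-α)/(2*α)))ᴴ *
      (mpow σ ((1-α)/(2*α)) * ρ * mpow σ ((1-α)/(2*α)))) (α/2)).trace.re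

/-- The extended sandwiched Rényi divergence `D̃_α(ρ‖σ)`, `+∞` when `supp ρ ⊄ supp σ`. -/
def sandwichedRenyi {n : Type*} [Fintype n] [DecidableEq n] (α : ℝ)
    (ρ σ : Matrix n n ℂ) : EReal :=
  if suppLE ρ σ then ((sandwichedRenyiReal α ρ σ : ℝ) : EReal) else ⊤

/-- Finite part of the geometric Rényi divergence:
`(1/(α-1)) ln tr[σ (σ^{-1/2} ρ σ^{-1/2})^α]` (inverses taken on the support of `σ`). -/
def geomRenyiReal {n : Type*} [Fintype n] [DecidableEq n] (α : ℝ)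
    (ρ σ : Matrix n n ℂ) : ℝ :=
  (α - 1)⁻¹ * Real.log ((σ * mpow (mpow σ (-(1/2)) * ρ * mpow σ (-(1/2))) α).trace.re)

/-- The geometric Rényi divergence `D̂_α(ρ‖σ)`, `+∞` when `supp ρ ⊄ supp σ`. -/
def geomRenyi {n : Type*} [Fintype n] [DecidableEq n] (α : ℝ)
    (ρ σ : Matrix n n ℂ) : EReal :=
  if suppLE ρ σ then ((geomRenyiReal α ρ σ : ℝ) : EReal) else ⊤

/-- The Umegaki relative entropy `D(ρ‖σ) = tr[ρ(ln ρ - ln σ)]`,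
`+∞` when `supp ρ ⊄ supp σ`. -/
def relEntropy {n : Type*} [Fintype n] [DecidableEq n] (ρ σ : Matrix n n ℂ) : EReal :=
  if suppLE ρ σ then (((ρ * (mlog ρ - mlog σ)).trace.re : ℝ) : EReal) else ⊤

/-- `γ_ε(ρ‖σ) = sup { tr(Qσ) : 0 ≤ Q ≤ I, tr(Qρ) ≤ ε }`. -/
def gammaEps {n : Type*} [Fintype n] [DecidableEq n] (ε : ℝ) (ρ σ : Matrix n n ℂ) : ℝ :=
  sSup { s : ℝ | ∃ Q : Matrix n n ℂ, Q.PosSemidef ∧ loewnerLE Q 1 ∧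
    ((Q * ρ).trace).re ≤ ε ∧ s = ((Q * σ).trace).re }

/-- The hypothesis-testing divergence `D̃_H^ε(ρ‖σ) = - ln(1 - γ_ε(ρ‖σ))`. -/
def DHtest {n : Type*} [Fintype n] [DecidableEq n] (ε : ℝ) (ρ σ : Matrix n n ℂ) : ℝ :=
  - Real.log (1 - gammaEps ε ρ σ)

/-- The revised unambiguous discrimination success probability `P_succ^q(E,p,η)`. -/
def Psucc {n : Type*} [Fintype n] [DecidableEq n] {k : ℕ}
    (ρ : Fin k → Matrix n n ℂ) (p : Fin k → ℝ) (η : ℝ) : ℝ :=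
  sSup { s : ℝ | ∃ Q : Fin k → Matrix n n ℂ, (∀ x, (Q x).PosSemidef) ∧
    loewnerLE (∑ x, Q x) (((1 - η : ℝ) : ℂ) • 1) ∧
    s = ∑ x, p x * ((ρ x * Q x).trace).re }

/-- `q_re({Q_x}) = min { tr P : P Hermitian, P ≥ Q_x for all x }`. -/
def qre {n : Type*} [Fintype n] {k : ℕ} (Q : Fin k → Matrix n n ℂ) : ℝ :=
  sInf { t : ℝ | ∃ P : Matrix n n ℂ, P.IsHermitian ∧ (∀ x, loewnerLE (Q x) P) ∧
    t = (P.trace).re }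

/-- The classical–quantum state `ρ_{XA} = Σ_x p_x |x⟩⟨x| ⊗ ρ_x`. -/
def cqState {n : Type*} {k : ℕ} (p : Fin k → ℝ) (ρ : Fin k → Matrix n n ℂ) :
    Matrix (Fin k × n) (Fin k × n) ℂ :=
  ∑ x, ((p x : ℝ) : ℂ) • (Matrix.single x x (1:ℂ) ⊗ₖ ρ x)

/-- The `m`-fold tensor power `ρ^{⊗m}`. -/
def tpow {d : ℕ} (ρ : Matrix (Fin d) (Fin d) ℂ) (m : ℕ) :
    Matrix (Fin m → Fin d) (Fin m → Fin d) ℂ :=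
  Matrix.of fun i j => ∏ t, ρ (i t) (j t)

/-- Extraction of the `(i,j)` block of a matrix on a product index. -/
def blockAt {R n m : Type*} (i j : R) : Matrix (R × n) (R × m) ℂ →ₗ[ℂ] Matrix n m ℂ where
  toFun X := Matrix.of fun a b => X (i, a) (j, b)
  map_add' _ _ := rfl
  map_smul' _ _ := rfl

/-- `id_R ⊗ Φ`, the trivial extension of a superoperator `Φ` by a reference system `R`. -/
def tensorId {R n m : Type*} (Φ : Matrix n n ℂ →ₗ[ℂ] Matrix m m ℂ) :
    Matrix (R × n) (R × n) ℂ →ₗ[ℂ] Matrix (R × m) (R × m) ℂ where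
  toFun X := Matrix.of fun pq rs => Φ (blockAt pq.1 rs.1 X) pq.2 rs.2
  map_add' X Y := by
    ext pq rs
    simp only [Matrix.of_apply, map_add, Matrix.add_apply]
  map_smul' c X := by
    ext pq rs
    simp only [Matrix.of_apply, _root_.map_smul, Matrix.smul_apply, RingHom.id_apply,
      smul_eq_mul]

/-- Complete positivity of a superoperator. -/
def IsCP {n m : Type*} [Fintype n] [Fintype m] (Φ : Matrix n n ℂ →ₗ[ℂ] Matrix m m ℂ) : Prop :=
  ∀ (r : ℕ) (X : Matrix (Fin r × n) (Fin r × n) ℂ), X.PosSemidef →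
    ((tensorId (R := Fin r) Φ) X).PosSemidef

/-- Trace preservation of a superoperator. -/
def IsTP {n m : Type*} [Fintype n] [Fintype m] (Φ : Matrix n n ℂ →ₗ[ℂ] Matrix m m ℂ) : Prop :=
  ∀ X : Matrix n n ℂ, (Φ X).trace = X.trace

/-- A quantum channel: completely positive and trace preserving. -/
def IsChannel {n m : Type*} [Fintype n] [Fintype m]
    (Φ : Matrix n n ℂ →ₗ[ℂ] Matrix m m ℂ) : Prop :=
  IsCP Φ ∧ IsTP Φ

/-- A positive superoperator. -/
def IsPosMap {n m : Type*} [Fintype n] [Fintype m]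
    (Φ : Matrix n n ℂ →ₗ[ℂ] Matrix m m ℂ) : Prop :=
  ∀ X : Matrix n n ℂ, X.PosSemidef → (Φ X).PosSemidef

/-- A trace-non-increasing superoperator. -/
def IsTraceNonincreasing {n m : Type*} [Fintype n] [Fintype m]
    (Φ : Matrix n n ℂ →ₗ[ℂ] Matrix m m ℂ) : Prop :=
  ∀ X : Matrix n n ℂ, X.PosSemidef → ((Φ X).trace).re ≤ (X.trace).re

/-- The geometric Rényi channel divergence
`D̂_α(T‖N) = sup_r sup_{ρ density on ℂ^r ⊗ ℂ^d} D̂_α((id_r ⊗ T)(ρ)‖(id_r ⊗ N)(ρ))`. -/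
def geomRenyiChannel {d d' : ℕ} (α : ℝ)
    (T N : Matrix (Fin d) (Fin d) ℂ →ₗ[ℂ] Matrix (Fin d') (Fin d') ℂ) : EReal :=
  ⨆ r : ℕ, ⨆ ρ : {ρ : Matrix (Fin r × Fin d) (Fin r × Fin d) ℂ // IsDensity ρ},
    geomRenyi α ((tensorId (R := Fin r) T) ρ.1) ((tensorId (R := Fin r) N) ρ.1)

/-- The state after the `(i+1)`-th invocation of the unknown channel `N` in an adaptive
protocol with initial state `τ` and interleaving channels `A i`:
`σ_1 = (id ⊗ N)(τ)`, `σ_{i+1} = (id ⊗ N)(A_i(σ_i))`. -/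
def outState {d d' : ℕ} (r : ℕ → ℕ)
    (τ : Matrix (Fin (r 0) × Fin d) (Fin (r 0) × Fin d) ℂ)
    (A : ∀ i : ℕ, Matrix (Fin (r i) × Fin d') (Fin (r i) × Fin d') ℂ →ₗ[ℂ]
      Matrix (Fin (r (i+1)) × Fin d) (Fin (r (i+1)) × Fin d) ℂ)
    (N : Matrix (Fin d) (Fin d) ℂ →ₗ[ℂ] Matrix (Fin d') (Fin d') ℂ) :
    (i : ℕ) → Matrix (Fin (r i) × Fin d') (Fin (r i) × Fin d') ℂ
  | 0 => (tensorId (R := Fin (r 0)) N) τ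
  | (i+1) => (tensorId (R := Fin (r (i+1))) N) ((A i) (outState r τ A N i))

/-- Optimal success probability `p_succ^{(nr)}(F,p,η)` of revised unambiguous discrimination
of the channels `N x` with priors `p x`, using `nr` invocations, over all adaptive protocols
(initial state, interleaving channels, and final POVM `M_0,…,M_k` with `M_0 ≥ η·I`). -/
def psuccChan {d d' : ℕ} {k : ℕ}
    (N : Fin k → (Matrix (Fin d) (Fin d) ℂ →ₗ[ℂ] Matrix (Fin d') (Fin d') ℂ))
    (p : Fin k → ℝ) (η : ℝ) (nr : ℕ) : ℝ :=
  sSup { s : ℝ | ∃ (r : ℕ → ℕ)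
    (τ : Matrix (Fin (r 0) × Fin d) (Fin (r 0) × Fin d) ℂ)
    (A : ∀ i : ℕ, Matrix (Fin (r i) × Fin d') (Fin (r i) × Fin d') ℂ →ₗ[ℂ]
      Matrix (Fin (r (i+1)) × Fin d) (Fin (r (i+1)) × Fin d) ℂ)
    (M : Fin (k+1) → Matrix (Fin (r (nr-1)) × Fin d') (Fin (r (nr-1)) × Fin d') ℂ),
    IsDensity τ ∧ (∀ i, IsChannel (A i)) ∧
    (∀ j, (M j).PosSemidef) ∧ (∑ j, M j = 1) ∧ loewnerLE (((η : ℝ) : ℂ) • 1) (M 0) ∧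
    s = ∑ x, p x * ((M x.succ * outState r τ A (N x) (nr - 1)).trace).re }



lemma psd_sum' {n ι : Type*} [Fintype n] (s : Finset ι) (f : ι → Matrix n n ℂ)
    (h : ∀ i ∈ s, (f i).PosSemidef) : (∑ i ∈ s, f i).PosSemidef := by
  classical
  induction s using Finset.induction with
  | empty => simpa using Matrix.PosSemidef.zero
  | insert _ _ hi ih =>
    rw [Finset.sum_insert hi]
    exact ((h _ (Finset.mem_insert_self _ _)).add
      (ih fun i hmem => h i (Finset.mem_insert_of_mem hmem)))

lemma psd_trace_re_nonneg' {n : Type*} [Fintype n] [DecidableEq n] {M : Matrix n n ℂ}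
    (hM : M.PosSemidef) : 0 ≤ M.trace.re := by
  have h : ∀ i, 0 ≤ (M i i).re := by
    intro i
    have := hM.dotProduct_mulVec_nonneg (Pi.single i 1)
    have h2 : star (Pi.single i 1) ⬝ᵥ M *ᵥ Pi.single i 1 = M i i := by
      simp [mulVec_single, dotProduct, Pi.single_apply, apply_ite]
    rw [h2] at this
    exact (Complex.le_def.mp this).1
  rw [Matrix.trace, Complex.re_sum]
  exact Finset.sum_nonneg fun i _ => h i

lemma kraus_trace' {d m : ℕ} (E : Fin m → Matrix (Fin d) (Fin d) ℂ)
    (hE : ∑ j, E j * (E j)ᴴ = 1) (P : Matrix (Fin d) (Fin d) ℂ) :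
    (∑ j, (E j)ᴴ * P * E j).trace = P.trace := by
  rw [Matrix.trace_sum]
  calc ∑ j, ((E j)ᴴ * P * E j).trace
      = ∑ j, (E j * (E j)ᴴ * P).trace := by
        refine Finset.sum_congr rfl fun j _ => ?_
        rw [Matrix.trace_mul_cycle, Matrix.mul_assoc]
    _ = ((∑ j, E j * (E j)ᴴ) * P).trace := by rw [Finset.sum_mul, Matrix.trace_sum]
    _ = P.trace := by rw [hE, Matrix.one_mul]

/-- monotonicity of `q_re` under a quantum channel in Kraus form
`C(ρ) = Σ_j E_j† ρ E_j` with `Σ_j E_j E_j† = I`: `q_re({C(ρ_x)}) ≤ q_re({ρ_x})`. -/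
theorem stmt9 {d k m : ℕ}
    (ρ : Fin k → Matrix (Fin d) (Fin d) ℂ) (hρ : ∀ x, IsDensity (ρ x))
    (E : Fin m → Matrix (Fin d) (Fin d) ℂ) (hE : ∑ j, E j * (E j)ᴴ = 1) :
    qre (fun x => ∑ j, (E j)ᴴ * ρ x * E j) ≤ qre ρ := by
  unfold qre
  rcases Nat.eq_zero_or_pos k with hk | hk
  · subst hk
    apply le_of_eq
    congr 1
    ext t
    simp only [Set.mem_setOf_eq]
    constructor <;> (rintro ⟨P, h1, _, h3⟩; exact ⟨P, h1, fun x => x.elim0, h3⟩)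
  · apply csInf_le_csInf
    · refine ⟨0, ?_⟩
      rintro t ⟨P, hP, hle, rfl⟩
      set x0 : Fin k := ⟨0, hk⟩
      have hQ : (∑ j, (E j)ᴴ * ρ x0 * E j).PosSemidef :=
        psd_sum' _ _ fun j _ => ((hρ x0).1.conjTranspose_mul_mul_same (E j))
      have hP' : P.PosSemidef := by
        have := (hle x0).add hQ
        simpa using this
      exact psd_trace_re_nonneg' hP'
    · refine ⟨(∑ x, ρ x).trace.re, ∑ x, ρ x, ?_, ?_, rfl⟩
      · exact (psd_sum' _ _ fun x _ => (hρ x).1).isHermitian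
      · intro x
        unfold loewnerLE
        have h : (∑ y, ρ y) - ρ x = ∑ y ∈ Finset.univ.erase x, ρ y := by
          rw [eq_comm, eq_sub_iff_add_eq, Finset.sum_erase_add _ _ (Finset.mem_univ x)]
        rw [h]
        exact psd_sum' _ _ fun y _ => (hρ y).1
    · rintro t ⟨P, hP, hle, rfl⟩
      have hPpsd : P.PosSemidef := by
        set x0 : Fin k := ⟨0, hk⟩
        have hQ : (ρ x0).PosSemidef := (hρ x0).1
        have := (hle x0).add hQ
        simpa using this
      refine ⟨∑ j, (E j)ᴴ * P * E j, ?_, ?_, ?_⟩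
      · exact (psd_sum' _ _ fun j _ => hPpsd.conjTranspose_mul_mul_same (E j)).isHermitian
      · intro x
        unfold loewnerLE
        have h : (∑ j, (E j)ᴴ * P * E j) - (∑ j, (E j)ᴴ * ρ x * E j)
            = ∑ j, (E j)ᴴ * (P - ρ x) * E j := by
          rw [← Finset.sum_sub_distrib]
          exact Finset.sum_congr rfl fun j _ => by noncomm_ring
        rw [h]
        exact psd_sum' _ _ fun j _ => (hle x).conjTranspose_mul_mul_same (E j)
      · rw [kraus_trace' E hE P]

end
end

section
/- Let ρ_1,…,ρ_k be density matrices on ℂ^d. Then there exists η* ∈ [0,1) such that for every η ∈ [η*,1), q_re({ρ_x}) = sup over probability vectors p = (p_1,…,p_k) with p_x > 0 and Σ_x p_x = 1 of the ratio P_succ^q(E,p,η) / P_succ^c(p,η), where P_succ^c(p,η) = (1−η)·max_x p_x, and the supremum is attained at the uniform distribution p_x = 1/k. -/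
open Matrix Filter
open scoped Kronecker Classical ComplexOrder

noncomputable section

set_option maxHeartbeats 4000000

section AuxQre

variable {d k : ℕ}

private lemma aux_helper1 {A B C : ℝ} (h : ∀ t : ℝ, 0 < t → A + t * B ≤ C) : A ≤ C := by
  by_contra hlt
  push_neg at hlt
  have hAC : 0 < A - C := by linarith
  set t := (A - C) / (2 * (|B| + 1)) with ht
  have ht0 : 0 < t := div_pos hAC (by positivity)
  have h2 := h t ht0
  have h3 : t * B ≥ -(t * (|B| + 1)) := by
    have : t * B ≥ -(t * |B|) := by nlinarith [neg_abs_le B, ht0.le]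
    nlinarith [ht0.le]
  have h4 : t * (|B| + 1) = (A - C) / 2 := by
    rw [ht]; field_simp
  nlinarith

private lemma aux_helper2 {B C : ℝ} (h : ∀ t : ℝ, 0 < t → t * B ≤ C) : B ≤ 0 := by
  by_contra hlt
  push_neg at hlt
  have h1 := h 1 one_pos
  rw [one_mul] at h1
  have hC : 0 < C + 1 := by linarith
  have h2 := h ((C + 1) / B) (div_pos hC hlt)
  rw [div_mul_cancel₀ _ (ne_of_gt hlt)] at h2
  linarith

private lemma aux_re_real_smul (r : ℝ) (z : ℂ) : (r • z).re = r * z.re := by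
  simp [Complex.real_smul, Complex.mul_re]

private lemma aux_re_ofReal_mul (r : ℝ) (z : ℂ) : (((r : ℂ)) * z).re = r * z.re := by
  simp [Complex.mul_re]

private lemma aux_herm_quad_real {A : Matrix (Fin d) (Fin d) ℂ} (hA : A.IsHermitian)
    (x : Fin d → ℂ) : (star x ⬝ᵥ A *ᵥ x).im = 0 := by
  have h1 : star (star x ⬝ᵥ A *ᵥ x) = star x ⬝ᵥ A *ᵥ x := by
    conv_lhs => rw [star_dotProduct, star_star, star_mulVec, ← dotProduct_mulVec, hA.eq]
  exact Complex.conj_eq_iff_im.mp h1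

private lemma aux_psd_diag_nonneg {A : Matrix (Fin d) (Fin d) ℂ} (hA : A.PosSemidef)
    (i : Fin d) : 0 ≤ A i i := by
  exact hA.diag_nonneg

private lemma aux_psd_trace_re_nonneg {A : Matrix (Fin d) (Fin d) ℂ} (hA : A.PosSemidef) :
    0 ≤ A.trace.re := by
  rw [Matrix.trace, Complex.re_sum]
  exact Finset.sum_nonneg fun i _ => (Complex.le_def.mp (aux_psd_diag_nonneg hA i)).1

private lemma aux_rtr_nonneg {A B : Matrix (Fin d) (Fin d) ℂ} (hA : A.PosSemidef)
    (hB : B.PosSemidef) : 0 ≤ ((A * B).trace).re := by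
  open scoped MatrixOrder in
  have hs : 0 ≤ CFC.sqrt A := CFC.sqrt_nonneg A
  open scoped MatrixOrder in
  have hss : CFC.sqrt A * CFC.sqrt A = A := CFC.sqrt_mul_sqrt_self A hA.nonneg
  have h2 : (CFC.sqrt A * B * CFC.sqrt A).PosSemidef := by
    have := hB.mul_mul_conjTranspose_same (CFC.sqrt A)
    rwa [hs.posSemidef.isHermitian.eq] at this
  have h1 : (CFC.sqrt A * B * CFC.sqrt A).trace = (A * B).trace := by
    rw [Matrix.trace_mul_cycle, hss]
  rw [← h1]
  exact aux_psd_trace_re_nonneg h2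

private lemma aux_trace_mul_vecMulVec (A : Matrix (Fin d) (Fin d) ℂ) (x : Fin d → ℂ) :
    (A * vecMulVec x (star x)).trace = star x ⬝ᵥ A *ᵥ x := by
  simp only [Matrix.trace, Matrix.diag, Matrix.mul_apply, vecMulVec_apply, dotProduct,
    Matrix.mulVec, Pi.star_apply, Finset.mul_sum]
  congr 1; ext i; congr 1; ext j; ring

private lemma aux_psd_vecMulVec (x : Fin d → ℂ) : (vecMulVec x (star x)).PosSemidef := by
  refine Matrix.PosSemidef.of_dotProduct_mulVec_nonneg ?_ ?_
  · ext i j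
    simp [vecMulVec_apply, conjTranspose_apply, mul_comm]
  · intro y
    have h1 : vecMulVec x (star x) *ᵥ y = (star x ⬝ᵥ y) • x := by
      ext i
      simp only [vecMulVec_apply, Matrix.mulVec, dotProduct, Pi.star_apply, Pi.smul_apply,
        smul_eq_mul, Finset.sum_mul]
      congr 1; ext j; ring
    have h2 : star y ⬝ᵥ x = star (star x ⬝ᵥ y) := star_dotProduct _ _
    rw [h1, dotProduct_smul, h2, smul_eq_mul]
    exact mul_star_self_nonneg _

private lemma aux_posSemidef_of_rtr {A : Matrix (Fin d) (Fin d) ℂ} (hA : A.IsHermitian)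
    (h : ∀ R : Matrix (Fin d) (Fin d) ℂ, R.PosSemidef → 0 ≤ ((A * R).trace).re) :
    A.PosSemidef := by
  refine Matrix.PosSemidef.of_dotProduct_mulVec_nonneg hA fun x => ?_
  have h1 := h _ (aux_psd_vecMulVec x)
  rw [aux_trace_mul_vecMulVec] at h1
  rw [Complex.le_def]
  exact ⟨by simpa using h1, ((aux_herm_quad_real hA x).symm : _)⟩

private lemma aux_real_smul_matrix (a : ℝ) (A : Matrix (Fin d) (Fin d) ℂ) :
    a • A = ((a : ℂ)) • A := by
  ext i j; simp [Complex.real_smul]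

private lemma aux_psd_smul_real {a : ℝ} (ha : 0 ≤ a) {A : Matrix (Fin d) (Fin d) ℂ}
    (hA : A.PosSemidef) : (a • A).PosSemidef := by
  rw [aux_real_smul_matrix]
  refine Matrix.PosSemidef.of_dotProduct_mulVec_nonneg ?_ fun x => ?_
  · unfold Matrix.IsHermitian
    rw [conjTranspose_smul, hA.1.eq, Complex.star_def, Complex.conj_ofReal]
  · rw [Matrix.smul_mulVec, dotProduct_smul, smul_eq_mul]
    have h0 : (0:ℂ) ≤ (a:ℂ) := by exact_mod_cast Complex.zero_le_real.mpr ha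
    exact mul_nonneg h0 (hA.dotProduct_mulVec_nonneg x)

private lemma aux_pd_smul_pos {a : ℝ} (ha : 0 < a) {A : Matrix (Fin d) (Fin d) ℂ}
    (hA : A.PosDef) : (a • A).PosDef := by
  rw [aux_real_smul_matrix]
  refine Matrix.PosDef.of_dotProduct_mulVec_pos ?_ fun x hx => ?_
  · unfold Matrix.IsHermitian
    rw [conjTranspose_smul, hA.1.eq, Complex.star_def, Complex.conj_ofReal]
  · rw [Matrix.smul_mulVec, dotProduct_smul, smul_eq_mul]
    have h0 : (0:ℂ) < (a:ℂ) := by exact_mod_cast Complex.zero_lt_real.mpr ha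
    exact mul_pos h0 (hA.dotProduct_mulVec_pos hx)

private lemma aux_herm_real_smul (a : ℝ) {A : Matrix (Fin d) (Fin d) ℂ}
    (hA : A.IsHermitian) : (a • A).IsHermitian := by
  unfold Matrix.IsHermitian
  rw [conjTranspose_smul, hA.eq, star_trivial]

private lemma aux_psd_sum {s : Finset (Fin k)} {Q : Fin k → Matrix (Fin d) (Fin d) ℂ}
    (h : ∀ x, (Q x).PosSemidef) : (∑ x ∈ s, Q x).PosSemidef := by
  classical
  induction s using Finset.induction with
  | empty => simpa using Matrix.PosSemidef.zero
  | insert a s hx ih => rw [Finset.sum_insert hx]; exact (h _).add ih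

private lemma aux_pd_lower {A : Matrix (Fin d) (Fin d) ℂ} (hA : A.PosDef) :
    ∃ μ : ℝ, 0 < μ ∧ ∀ x : Fin d → ℂ,
      μ * (∑ i, Complex.normSq (x i)) ≤ (star x ⬝ᵥ A *ᵥ x).re := by
  rcases Nat.eq_zero_or_pos d with hd | hd
  · subst hd
    exact ⟨1, one_pos, fun x => by simp [dotProduct]⟩
  have : Nonempty (Fin d) := Fin.pos_iff_nonempty.mp hd
  have hne : (Finset.univ : Finset (Fin d)).Nonempty := Finset.univ_nonempty
  have hH := hA.isHermitian
  set μ := Finset.univ.inf' hne hH.eigenvalues with hμdef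
  have hμ : 0 < μ := by
    rw [hμdef, Finset.lt_inf'_iff]
    exact fun i _ => hA.eigenvalues_pos i
  have key : (A - (μ:ℂ) • 1).PosSemidef := by
    have hU : (hH.eigenvectorUnitary : Matrix (Fin d) (Fin d) ℂ) *
        star (hH.eigenvectorUnitary : Matrix (Fin d) (Fin d) ℂ) = 1 :=
      (Matrix.mem_unitaryGroup_iff).mp (hH.eigenvectorUnitary).2
    have h2 : diagonal (fun i : Fin d => ((hH.eigenvalues i - μ : ℝ) : ℂ)) =
        diagonal (RCLike.ofReal ∘ hH.eigenvalues) - (μ:ℂ) • 1 := by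
      rw [smul_one_eq_diagonal, diagonal_sub]
      congr 1; ext i; simp [Function.comp]
    have h1 : A - (μ:ℂ) • 1 = (hH.eigenvectorUnitary : Matrix (Fin d) (Fin d) ℂ) *
        (diagonal (fun i : Fin d => ((hH.eigenvalues i - μ : ℝ) : ℂ))) *
        star (hH.eigenvectorUnitary : Matrix (Fin d) (Fin d) ℂ) := by
      rw [h2, Matrix.mul_sub, Matrix.sub_mul]
      rw [← Unitary.conjStarAlgAut_apply (S := ℂ), ← hH.spectral_theorem]
      congr 1
      rw [Matrix.mul_smul, Matrix.mul_one, Matrix.smul_mul, hU]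
    rw [h1]
    have hdiag : (diagonal (fun i : Fin d => ((hH.eigenvalues i - μ : ℝ) : ℂ))).PosSemidef := by
      refine Matrix.PosSemidef.diagonal fun i => Complex.zero_le_real.mpr ?_
      have : μ ≤ hH.eigenvalues i := Finset.inf'_le _ (Finset.mem_univ i)
      linarith
    have := hdiag.mul_mul_conjTranspose_same
      (hH.eigenvectorUnitary : Matrix (Fin d) (Fin d) ℂ)
    rwa [Matrix.star_eq_conjTranspose]
  refine ⟨μ, hμ, fun x => ?_⟩
  have hxx : star x ⬝ᵥ x = ((∑ i, Complex.normSq (x i) : ℝ) : ℂ) := by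
    simp only [dotProduct, Pi.star_apply]
    push_cast
    congr 1; ext i
    rw [Complex.star_def, mul_comm, Complex.mul_conj]
  have hdec : star x ⬝ᵥ (A - (μ:ℂ) • 1) *ᵥ x
      = star x ⬝ᵥ A *ᵥ x - (μ:ℂ) * (star x ⬝ᵥ x) := by
    rw [Matrix.sub_mulVec, dotProduct_sub, Matrix.smul_mulVec, Matrix.one_mulVec,
      dotProduct_smul, smul_eq_mul]
  have h3 := (Complex.le_def.mp (key.dotProduct_mulVec_nonneg x)).1
  simp only [Complex.zero_re] at h3
  rw [hdec, hxx, ← Complex.ofReal_mul, Complex.sub_re, Complex.ofReal_re] at h3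
  linarith

private lemma aux_pd_perturb {A : Matrix (Fin d) (Fin d) ℂ} (hA : A.PosDef) :
    ∃ ε : ℝ, 0 < ε ∧ ∀ E : Matrix (Fin d) (Fin d) ℂ, E.IsHermitian →
      (∀ i j, ‖E i j‖ ≤ ε) → (A + E).PosDef := by
  obtain ⟨μ, hμ, hlow⟩ := aux_pd_lower hA
  refine ⟨μ / (2 * (d + 1)), by positivity, fun E hE hEb => ?_⟩
  refine Matrix.PosDef.of_dotProduct_mulVec_pos (hA.isHermitian.add hE) fun x hx => ?_
  set N := ∑ i, Complex.normSq (x i) with hN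
  have hN0 : 0 < N := by
    obtain ⟨i, hi⟩ := Function.ne_iff.mp hx
    refine Finset.sum_pos' (fun j _ => Complex.normSq_nonneg _) ⟨i, Finset.mem_univ i, ?_⟩
    simpa [Complex.normSq_pos] using hi
  have hEbound : |(star x ⬝ᵥ E *ᵥ x).re| ≤ μ / (2 * (d + 1)) * (d * N) := by
    set ε := μ / (2 * (d + 1)) with hε
    have hε0 : 0 ≤ ε := by positivity
    have h1 : ‖star x ⬝ᵥ E *ᵥ x‖ ≤ ε * (∑ i, ‖x i‖) ^ 2 := by
      calc ‖star x ⬝ᵥ E *ᵥ x‖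
          ≤ ∑ i, ‖star (x i) * (E *ᵥ x) i‖ := by
            rw [dotProduct]
            exact norm_sum_le _ _
        _ ≤ ∑ i, ‖x i‖ * (ε * ∑ j, ‖x j‖) := by
            refine Finset.sum_le_sum fun i _ => ?_
            rw [norm_mul]
            have h2 : ‖(E *ᵥ x) i‖ ≤ ε * ∑ j, ‖x j‖ := by
              rw [Matrix.mulVec]
              calc ‖E i ⬝ᵥ x‖ ≤ ∑ j, ‖E i j * x j‖ :=
                    norm_sum_le _ _
                _ ≤ ∑ j, ε * ‖x j‖ := by
                    refine Finset.sum_le_sum fun j _ => ?_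
                    rw [norm_mul]
                    exact mul_le_mul_of_nonneg_right (hEb i j) (norm_nonneg _)
                _ = ε * ∑ j, ‖x j‖ := by rw [Finset.mul_sum]
            calc ‖star (x i)‖ * ‖(E *ᵥ x) i‖
                ≤ ‖star (x i)‖ * (ε * ∑ j, ‖x j‖) :=
                  mul_le_mul_of_nonneg_left h2 (norm_nonneg _)
              _ = ‖x i‖ * (ε * ∑ j, ‖x j‖) := by
                  simp
        _ = ε * (∑ i, ‖x i‖) ^ 2 := by
            rw [← Finset.sum_mul]
            ring
    have h3 : (∑ i, ‖x i‖) ^ 2 ≤ d * N := by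
      have := sq_sum_le_card_mul_sum_sq (s := (Finset.univ : Finset (Fin d)))
        (f := fun i => ‖x i‖)
      simpa [hN, Complex.sq_norm] using this
    calc |(star x ⬝ᵥ E *ᵥ x).re| ≤ ‖star x ⬝ᵥ E *ᵥ x‖ := Complex.abs_re_le_norm _
      _ ≤ ε * (∑ i, ‖x i‖) ^ 2 := h1
      _ ≤ ε * (d * N) := mul_le_mul_of_nonneg_left h3 hε0
  have hre : 0 < (star x ⬝ᵥ (A + E) *ᵥ x).re := by
    have hsplit : star x ⬝ᵥ (A + E) *ᵥ x = star x ⬝ᵥ A *ᵥ x + star x ⬝ᵥ E *ᵥ x := by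
      rw [Matrix.add_mulVec, dotProduct_add]
    rw [hsplit, Complex.add_re]
    have hA1 := hlow x
    have hd1 : μ / (2 * (d + 1)) * (d * N) < μ * N := by
      rw [div_mul_eq_mul_div, div_lt_iff₀ (by positivity)]
      calc μ * (d * N) = μ * N * d := by ring
        _ < μ * N * (2 * (d+1)) := by
            exact mul_lt_mul_of_pos_left (by push_cast; linarith) (by positivity)
    have := abs_le.mp hEbound
    linarith [this.1]
  rw [Complex.lt_def]
  refine ⟨by simpa using hre, ?_⟩
  simp [aux_herm_quad_real (hA.isHermitian.add hE) x]

private lemma aux_rep_functional (g : Matrix (Fin d) (Fin d) ℂ →ₗ[ℝ] ℝ) :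
    ∃ G : Matrix (Fin d) (Fin d) ℂ, G.IsHermitian ∧
      ∀ R : Matrix (Fin d) (Fin d) ℂ, R.IsHermitian → ((G * R).trace).re = g R := by
  classical
  set Cm : Matrix (Fin d) (Fin d) ℂ := Matrix.of fun j i =>
    ((g (single i j 1) : ℝ) : ℂ) - Complex.I * ((g (single i j Complex.I) : ℝ) : ℂ)
    with hCm
  have trace_E : ∀ (i j : Fin d) (z : ℂ), (Cm * single i j z).trace = Cm j i * z := by
    intro i j z
    rw [Matrix.trace]
    have hdiag : ∀ a, (Cm * single i j z).diag a
        = if j = a then Cm a i * z else 0 := by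
      intro a
      simp only [Matrix.diag, Matrix.mul_apply, Matrix.single, Matrix.of_apply,
        mul_ite, mul_zero, ite_and]
      rw [Finset.sum_ite_eq]
      simp
    rw [Finset.sum_congr rfl fun a _ => hdiag a]
    rw [Finset.sum_ite_eq]
    simp
  have key : ∀ A : Matrix (Fin d) (Fin d) ℂ, ((Cm * A).trace).re = g A := by
    intro A
    have expand : A = ∑ i : Fin d, ∑ j : Fin d,
        ((A i j).re • single i j 1 + (A i j).im • single i j Complex.I) := by
      conv_lhs => rw [matrix_eq_sum_single A]
      refine Finset.sum_congr rfl fun i _ => Finset.sum_congr rfl fun j _ => ?_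
      rw [smul_single, smul_single, ← single_add]
      congr 1
      rw [Complex.real_smul, Complex.real_smul, mul_one, Complex.re_add_im]
    conv_rhs => rw [expand]
    conv_lhs => rw [expand]
    rw [map_sum, Matrix.mul_sum, Matrix.trace_sum, Complex.re_sum]
    refine Finset.sum_congr rfl fun i _ => ?_
    rw [map_sum, Matrix.mul_sum, Matrix.trace_sum, Complex.re_sum]
    refine Finset.sum_congr rfl fun j _ => ?_
    have hbase1 : (Cm j i * 1).re = g (single i j 1) := by
      rw [hCm]
      simp [Matrix.of_apply, Complex.sub_re, Complex.mul_re]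
    have hbase2 : (Cm j i * Complex.I).re = g (single i j Complex.I) := by
      rw [hCm]
      simp [Matrix.of_apply, Complex.sub_re, Complex.mul_re, Complex.sub_im, Complex.mul_im]
    rw [map_add, LinearMap.map_smul, LinearMap.map_smul, smul_eq_mul, smul_eq_mul]
    rw [Matrix.mul_add, Matrix.mul_smul, Matrix.mul_smul, Matrix.trace_add, Matrix.trace_smul,
      Matrix.trace_smul, Complex.add_re, aux_re_real_smul, aux_re_real_smul, trace_E, trace_E,
      hbase1, hbase2]
  refine ⟨(((2:ℝ)⁻¹ : ℂ)) • (Cm + Cmᴴ), ?_, ?_⟩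
  · unfold Matrix.IsHermitian
    rw [conjTranspose_smul, conjTranspose_add, conjTranspose_conjTranspose, add_comm Cmᴴ Cm]
    congr 1
    simp
  · intro R hR
    have h1 : (Cmᴴ * R).trace = star ((Cm * R).trace) := by
      conv_lhs => rw [← hR.eq, ← conjTranspose_mul, Matrix.trace_conjTranspose,
        Matrix.trace_mul_comm]
    rw [Matrix.smul_mul, Matrix.add_mul, Matrix.trace_smul, Matrix.trace_add, h1,
      smul_eq_mul, Complex.star_def, Complex.add_conj]
    rw [show ((2:ℝ):ℂ)⁻¹ * ((2 * ((Cm * R).trace.re) : ℝ):ℂ) = (((Cm * R).trace.re : ℝ) : ℂ) by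
      push_cast; ring]
    rw [Complex.ofReal_re, key]

end AuxQre


section AuxDual

variable {d k : ℕ}

private def msym (A : Matrix (Fin d) (Fin d) ℂ) : Matrix (Fin d) (Fin d) ℂ :=
  (((2:ℝ)⁻¹ : ℂ)) • (A + Aᴴ)

private lemma msym_herm (A : Matrix (Fin d) (Fin d) ℂ) : (msym A).IsHermitian := by
  unfold msym Matrix.IsHermitian
  rw [conjTranspose_smul, conjTranspose_add, conjTranspose_conjTranspose, add_comm Aᴴ A]
  congr 1
  simp

private lemma msym_of_herm {A : Matrix (Fin d) (Fin d) ℂ} (hA : A.IsHermitian) :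
    msym A = A := by
  unfold msym
  rw [hA.eq, ← two_smul ℂ A, smul_smul]
  norm_num

private lemma msym_sub (A B : Matrix (Fin d) (Fin d) ℂ) :
    msym (A - B) = msym A - msym B := by
  unfold msym
  rw [conjTranspose_sub, ← smul_sub]
  congr 1
  abel

private lemma msym_add (A B : Matrix (Fin d) (Fin d) ℂ) :
    msym (A + B) = msym A + msym B := by
  unfold msym
  rw [conjTranspose_add, ← smul_add]
  congr 1
  abel

private lemma msym_real_smul (a : ℝ) (A : Matrix (Fin d) (Fin d) ℂ) :
    msym (a • A) = a • msym A := by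
  unfold msym
  rw [conjTranspose_smul, star_trivial, ← smul_add, smul_comm]

private lemma aux_weak_dual (hk : 0 < k) {c : ℝ} (hc : 0 < c)
    {ρ : Fin k → Matrix (Fin d) (Fin d) ℂ} (hρ : ∀ x, (ρ x).PosSemidef)
    {p : Fin k → ℝ} (hp : ∀ x, 0 ≤ p x) {m : ℝ} (hm : ∀ x, p x ≤ m)
    {Q : Fin k → Matrix (Fin d) (Fin d) ℂ} (hQ : ∀ x, (Q x).PosSemidef)
    (hle : loewnerLE (∑ x, Q x) (((c : ℝ) : ℂ) • 1))
    {P : Matrix (Fin d) (Fin d) ℂ} (hP : ∀ x, loewnerLE (ρ x) P) :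
    ∑ x, p x * ((ρ x * Q x).trace).re ≤ c * m * P.trace.re := by
  have x0 : Fin k := ⟨0, hk⟩
  have hm0 : 0 ≤ m := le_trans (hp x0) (hm x0)
  have hPpsd : P.PosSemidef := by
    have h1 := (hP x0).add (hρ x0)
    simpa using h1
  have step1 : ∀ x, p x * ((ρ x * Q x).trace).re ≤ m * ((P * Q x).trace).re := by
    intro x
    have h0 : 0 ≤ ((ρ x * Q x).trace).re := aux_rtr_nonneg (hρ x) (hQ x)
    have h1 : ((ρ x * Q x).trace).re ≤ ((P * Q x).trace).re := by
      have h2 := aux_rtr_nonneg (hP x) (hQ x)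
      rw [Matrix.sub_mul, Matrix.trace_sub, Complex.sub_re] at h2
      linarith
    exact mul_le_mul (hm x) h1 h0 hm0
  have step2 : ∑ x, m * ((P * Q x).trace).re = m * ((P * ∑ x, Q x).trace).re := by
    rw [← Finset.mul_sum, Matrix.mul_sum, Matrix.trace_sum, Complex.re_sum]
  have step3 : ((P * ∑ x, Q x).trace).re ≤ c * P.trace.re := by
    have h2 := aux_rtr_nonneg hPpsd hle
    rw [Matrix.mul_sub, Matrix.trace_sub, Complex.sub_re, Matrix.mul_smul,
      Matrix.mul_one, Matrix.trace_smul, smul_eq_mul, aux_re_ofReal_mul] at h2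
    linarith
  calc ∑ x, p x * ((ρ x * Q x).trace).re ≤ ∑ x, m * ((P * Q x).trace).re :=
        Finset.sum_le_sum fun x _ => step1 x
    _ = m * ((P * ∑ x, Q x).trace).re := step2
    _ ≤ m * (c * P.trace.re) := mul_le_mul_of_nonneg_left step3 hm0
    _ = c * m * P.trace.re := by ring

private lemma aux_strong_dual (hk : 0 < k) {c : ℝ} (hc : 0 < c)
    (ρ : Fin k → Matrix (Fin d) (Fin d) ℂ) (hρ : ∀ x, (ρ x).PosSemidef)
    (hbdd : BddAbove { s : ℝ | ∃ Q : Fin k → Matrix (Fin d) (Fin d) ℂ,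
      (∀ x, (Q x).PosSemidef) ∧ loewnerLE (∑ x, Q x) (((c : ℝ) : ℂ) • 1) ∧
      s = ∑ x, (k:ℝ)⁻¹ * ((ρ x * Q x).trace).re }) :
    ∃ P : Matrix (Fin d) (Fin d) ℂ, P.IsHermitian ∧ (∀ x, loewnerLE (ρ x) P) ∧
      c * (k:ℝ)⁻¹ * P.trace.re ≤ sSup { s : ℝ | ∃ Q : Fin k → Matrix (Fin d) (Fin d) ℂ,
      (∀ x, (Q x).PosSemidef) ∧ loewnerLE (∑ x, Q x) (((c : ℝ) : ℂ) • 1) ∧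
      s = ∑ x, (k:ℝ)⁻¹ * ((ρ x * Q x).trace).re } := by
  classical
  have hk0 : ((k:ℝ)) ≠ 0 := Nat.cast_ne_zero.mpr hk.ne'
  set pset : Set ℝ := { s : ℝ | ∃ Q : Fin k → Matrix (Fin d) (Fin d) ℂ,
      (∀ x, (Q x).PosSemidef) ∧ loewnerLE (∑ x, Q x) (((c : ℝ) : ℂ) • 1) ∧
      s = ∑ x, (k:ℝ)⁻¹ * ((ρ x * Q x).trace).re } with hpset
  set S : ℝ := sSup pset with hS
  set f₀ : (Fin k → Matrix (Fin d) (Fin d) ℂ) → ℝ :=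
    fun Q => ∑ x, (k:ℝ)⁻¹ * ((ρ x * Q x).trace).re with hf₀
  set M : Set ((Fin d → Fin d → ℂ) × ℝ) := { w | ∃ Q : Fin k → Matrix (Fin d) (Fin d) ℂ,
    (∀ x, (Q x).PosSemidef) ∧
    (msym (Matrix.of w.1) - (∑ x, Q x - (c:ℝ) • 1)).PosDef ∧ w.2 < f₀ Q } with hM
  -- openness
  have hMopen : IsOpen M := by
    rw [Metric.isOpen_iff]
    rintro w ⟨Q, hQ, hpd, hlt⟩
    obtain ⟨ε, hε, hper⟩ := aux_pd_perturb hpd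
    refine ⟨min ε (f₀ Q - w.2), lt_min hε (by linarith), fun w' hw' => ?_⟩
    have hdist : dist w' w < min ε (f₀ Q - w.2) := Metric.mem_ball.mp hw'
    refine ⟨Q, hQ, ?_, ?_⟩
    · set E := msym (Matrix.of w'.1) - msym (Matrix.of w.1) with hE
      have hEher : E.IsHermitian := (msym_herm _).sub (msym_herm _)
      have hEb : ∀ i j, ‖E i j‖ ≤ ε := by
        intro i j
        have hof : E = msym (Matrix.of w'.1 - Matrix.of w.1) := by rw [msym_sub]
        have hVd : ∀ a b, ‖(Matrix.of w'.1 - Matrix.of w.1) a b‖ < ε := by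
          intro a b
          have h1 : dist (w'.1 a b) (w.1 a b) ≤ dist w'.1 w.1 :=
            le_trans (dist_le_pi_dist (w'.1 a) (w.1 a) b) (dist_le_pi_dist w'.1 w.1 a)
          have h2 : dist w'.1 w.1 ≤ dist w' w := by
            rw [Prod.dist_eq]; exact le_max_left _ _
          have h3 : dist w' w < ε := lt_of_lt_of_le hdist (min_le_left _ _)
          have h4 : ‖(Matrix.of w'.1 - Matrix.of w.1) a b‖
              = dist (w'.1 a b) (w.1 a b) := by
            rw [Complex.dist_eq]
            rfl
          linarith
        rw [hof]
        unfold msym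
        rw [Matrix.smul_apply, Matrix.add_apply, Matrix.conjTranspose_apply]
        rw [smul_eq_mul, norm_mul]
        have h5 := hVd i j
        have h6 := hVd j i
        have h7 : ‖star ((Matrix.of w'.1 - Matrix.of w.1) j i)‖
            = ‖(Matrix.of w'.1 - Matrix.of w.1) j i‖ := by
          rw [Complex.star_def, Complex.norm_conj]
        calc ‖(((2:ℝ)⁻¹ : ℂ))‖
              * ‖(Matrix.of w'.1 - Matrix.of w.1) i j
                + star ((Matrix.of w'.1 - Matrix.of w.1) j i)‖
            ≤ ‖(((2:ℝ)⁻¹ : ℂ))‖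
              * (‖(Matrix.of w'.1 - Matrix.of w.1) i j‖
                + ‖star ((Matrix.of w'.1 - Matrix.of w.1) j i)‖) := by
              refine mul_le_mul_of_nonneg_left ?_ (norm_nonneg _)
              exact norm_add_le _ _
          _ ≤ (2:ℝ)⁻¹ * (ε + ε) := by
              rw [h7]
              have h8 : ‖(((2:ℝ)⁻¹ : ℂ))‖ = (2:ℝ)⁻¹ := by
                rw [norm_inv]
                norm_num
              rw [h8]
              refine mul_le_mul_of_nonneg_left ?_ (by norm_num)
              linarith
          _ = ε := by ring
      have hgoal : msym (Matrix.of w'.1) - (∑ x, Q x - (c:ℝ) • 1)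
          = (msym (Matrix.of w.1) - (∑ x, Q x - (c:ℝ) • 1)) + E := by
        rw [hE]; abel
      rw [hgoal]
      exact hper E hEher hEb
    · have h1 : dist w'.2 w.2 ≤ dist w' w := by
        rw [Prod.dist_eq]; exact le_max_right _ _
      have h2 : dist w' w < f₀ Q - w.2 := lt_of_lt_of_le hdist (min_le_right _ _)
      have h3 : |w'.2 - w.2| < f₀ Q - w.2 := by
        rw [← Real.dist_eq]; linarith
      have := (abs_lt.mp h3).2
      linarith
  -- convexity
  have hMconv : Convex ℝ M := by
    rintro w1 ⟨Q1, hQ1, hpd1, hlt1⟩ w2 ⟨Q2, hQ2, hpd2, hlt2⟩ a b ha hb hab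
    rcases eq_or_lt_of_le ha with ha0 | ha0
    · rw [← ha0]
      have hb1 : b = 1 := by linarith
      rw [hb1]
      simpa using ⟨Q2, hQ2, hpd2, hlt2⟩
    refine ⟨fun x => a • Q1 x + b • Q2 x,
      fun x => (aux_psd_smul_real ha (hQ1 x)).add (aux_psd_smul_real hb (hQ2 x)), ?_, ?_⟩
    · have hof : Matrix.of ((a • w1 + b • w2).1) = a • Matrix.of w1.1 + b • Matrix.of w2.1 :=
        rfl
      have hc1 : (c:ℝ) • (1 : Matrix (Fin d) (Fin d) ℂ)
          = a • ((c:ℝ) • (1 : Matrix (Fin d) (Fin d) ℂ))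
            + b • ((c:ℝ) • (1 : Matrix (Fin d) (Fin d) ℂ)) := by
        rw [← add_smul, hab, one_smul]
      have hsum : (∑ x, (a • Q1 x + b • Q2 x)) = a • (∑ x, Q1 x) + b • (∑ x, Q2 x) := by
        rw [Finset.sum_add_distrib, Finset.smul_sum, Finset.smul_sum]
      have hXY : msym (Matrix.of ((a • w1 + b • w2).1))
            - (∑ x, (a • Q1 x + b • Q2 x) - (c:ℝ) • 1)
          = a • (msym (Matrix.of w1.1) - (∑ x, Q1 x - (c:ℝ) • 1))
            + b • (msym (Matrix.of w2.1) - (∑ x, Q2 x - (c:ℝ) • 1)) := by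
        rw [hof, msym_add, msym_real_smul, msym_real_smul, hsum]
        conv_lhs => rw [hc1]
        rw [smul_sub, smul_sub, smul_sub, smul_sub]
        abel
      rw [hXY]
      exact (aux_pd_smul_pos ha0 hpd1).add_posSemidef
        (aux_psd_smul_real hb hpd2.posSemidef)
    · have hf0comb : f₀ (fun x => a • Q1 x + b • Q2 x) = a * f₀ Q1 + b * f₀ Q2 := by
        simp only [hf₀]
        have hterm : ∀ x : Fin k, (k:ℝ)⁻¹ * ((ρ x * (a • Q1 x + b • Q2 x)).trace).re
            = a * ((k:ℝ)⁻¹ * ((ρ x * Q1 x).trace).re)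
              + b * ((k:ℝ)⁻¹ * ((ρ x * Q2 x).trace).re) := by
          intro x
          rw [Matrix.mul_add, Matrix.mul_smul, Matrix.mul_smul, Matrix.trace_add,
            Matrix.trace_smul, Matrix.trace_smul, Complex.add_re, aux_re_real_smul,
            aux_re_real_smul]
          ring
        rw [Finset.sum_congr rfl fun x _ => hterm x, Finset.sum_add_distrib]
        simp only [← Finset.mul_sum]
      have hsnd : (a • w1 + b • w2).2 = a * w1.2 + b * w2.2 := rfl
      rw [hsnd, hf0comb]
      have h1 : a * w1.2 < a * f₀ Q1 := mul_lt_mul_of_pos_left hlt1 ha0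
      have h2 : b * w2.2 ≤ b * f₀ Q2 := mul_le_mul_of_nonneg_left hlt2.le hb
      linarith
  -- excluded point
  have hnot : ((0 : Fin d → Fin d → ℂ), S) ∉ M := by
    rintro ⟨Q, hQ, hpd, hlt⟩
    have h0 : msym (Matrix.of (0 : Fin d → Fin d → ℂ)) = 0 := by
      have : Matrix.of (0 : Fin d → Fin d → ℂ) = (0 : Matrix (Fin d) (Fin d) ℂ) := rfl
      rw [this]
      unfold msym
      rw [conjTranspose_zero, add_zero, smul_zero]
    rw [h0, zero_sub, neg_sub] at hpd
    have hmem : f₀ Q ∈ pset := by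
      refine ⟨Q, hQ, ?_, rfl⟩
      show ((((c:ℝ)):ℂ) • 1 - ∑ x, Q x).PosSemidef
      have := hpd.posSemidef
      rwa [aux_real_smul_matrix] at this
    have := le_csSup hbdd hmem
    simp only at hlt
    rw [← hS] at this
    linarith
  -- separation
  obtain ⟨f, hf⟩ := geometric_hahn_banach_open_point hMconv hMopen hnot
  set lam : ℝ := f ((0 : Fin d → Fin d → ℂ), (1:ℝ)) with hlamdef
  set embL : Matrix (Fin d) (Fin d) ℂ →ₗ[ℝ] ((Fin d → Fin d → ℂ) × ℝ) :=
    { toFun := fun A => (Matrix.of.symm A, 0),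
      map_add' := fun A B => by refine Prod.ext rfl ?_; simp
      map_smul' := fun r A => by refine Prod.ext rfl ?_; simp } with hembL
  set gl : Matrix (Fin d) (Fin d) ℂ →ₗ[ℝ] ℝ := (f.toLinearMap.comp embL) with hgl
  have hdecomp : ∀ (A : Matrix (Fin d) (Fin d) ℂ) (v : ℝ),
      f (Matrix.of.symm A, v) = gl A + v * lam := by
    intro A v
    have h1 : ((Matrix.of.symm A, v) : (Fin d → Fin d → ℂ) × ℝ)
        = (Matrix.of.symm A, (0:ℝ)) + v • ((0 : Fin d → Fin d → ℂ), (1:ℝ)) := by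
      refine Prod.ext ?_ ?_ <;> simp
    rw [h1, map_add]
    have h2 : f (v • ((0 : Fin d → Fin d → ℂ), (1:ℝ))) = v * lam := by
      rw [ContinuousLinearMap.map_smul, smul_eq_mul]
    rw [h2]
    rfl
  have hfS : f ((0 : Fin d → Fin d → ℂ), S) = S * lam := by
    have h1 : ((0 : Fin d → Fin d → ℂ), S)
        = ((Matrix.of.symm (0 : Matrix (Fin d) (Fin d) ℂ), S) : (Fin d → Fin d → ℂ) × ℝ) :=
      rfl
    rw [h1, hdecomp, map_zero, zero_add]
  have hsep : ∀ w ∈ M, f w < S * lam := by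
    intro w hw
    rw [← hfS]
    exact hf w hw
  -- the key inequality
  have hstar : ∀ Q : Fin k → Matrix (Fin d) (Fin d) ℂ, (∀ x, (Q x).PosSemidef) →
      gl (∑ x, Q x - (c:ℝ) • (1 : Matrix (Fin d) (Fin d) ℂ)) + f₀ Q * lam ≤ S * lam := by
    intro Q hQ
    have key : ∀ t : ℝ, 0 < t →
        (gl (∑ x, Q x - (c:ℝ) • (1 : Matrix (Fin d) (Fin d) ℂ)) + f₀ Q * lam)
          + t * (gl (1 : Matrix (Fin d) (Fin d) ℂ) - lam) ≤ S * lam := by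
      intro t ht
      have hH : (∑ x, Q x - (c:ℝ) • (1 : Matrix (Fin d) (Fin d) ℂ)
          + t • (1 : Matrix (Fin d) (Fin d) ℂ)).IsHermitian := by
        refine (((aux_psd_sum fun x => hQ x).isHermitian.sub
          (aux_herm_real_smul c isHermitian_one)).add (aux_herm_real_smul t isHermitian_one))
      have hmem : ((Matrix.of.symm (∑ x, Q x - (c:ℝ) • 1 + t • 1), f₀ Q - t)
          : (Fin d → Fin d → ℂ) × ℝ) ∈ M := by
        refine ⟨Q, hQ, ?_, by simp only; linarith⟩
        have h1 : Matrix.of ((Matrix.of.symm (∑ x, Q x - (c:ℝ) • 1 + t • 1)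
            : Fin d → Fin d → ℂ)) = ∑ x, Q x - (c:ℝ) • 1 + t • 1 :=
          Matrix.of.apply_symm_apply _
        simp only [h1]
        rw [msym_of_herm hH, add_sub_cancel_left]
        exact aux_pd_smul_pos ht Matrix.PosDef.one
      have h2 := hsep _ hmem
      rw [hdecomp, map_add, LinearMap.map_smul, smul_eq_mul] at h2
      linarith
    exact aux_helper1 key
  -- positivity of lam
  have hlam_mem : ∀ v : ℝ, v < 0 → v * lam < S * lam := by
    intro v hv
    have hf0zero : f₀ (fun _ => (0 : Matrix (Fin d) (Fin d) ℂ)) = 0 := by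
      simp only [hf₀]
      simp
    have hm : (((0 : Fin d → Fin d → ℂ)), v) ∈ M := by
      refine ⟨fun _ => 0, fun _ => Matrix.PosSemidef.zero, ?_, ?_⟩
      · have h0 : msym (Matrix.of (0 : Fin d → Fin d → ℂ))
            - (∑ _x : Fin k, (0 : Matrix (Fin d) (Fin d) ℂ) - (c:ℝ) • 1)
            = (c:ℝ) • (1 : Matrix (Fin d) (Fin d) ℂ) := by
          have h00 : Matrix.of (0 : Fin d → Fin d → ℂ) = (0 : Matrix (Fin d) (Fin d) ℂ) := rfl
          rw [h00]
          unfold msym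
          rw [conjTranspose_zero, add_zero, smul_zero, Finset.sum_const_zero, zero_sub,
            zero_sub, neg_neg]
        rw [h0]
        exact aux_pd_smul_pos hc Matrix.PosDef.one
      · simpa only [hf0zero] using hv
    have h1 := hsep _ hm
    have h2 : ((0 : Fin d → Fin d → ℂ), v)
        = ((Matrix.of.symm (0 : Matrix (Fin d) (Fin d) ℂ), v) : (Fin d → Fin d → ℂ) × ℝ) := rfl
    rw [h2, hdecomp, map_zero, zero_add] at h1
    exact h1
  have hlam : 0 < lam := by
    rcases lt_trichotomy lam 0 with h | h | h
    · have h2 := hlam_mem (-1 - |S|) (by nlinarith [abs_nonneg S])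
      nlinarith [neg_abs_le S, abs_nonneg S]
    · have h2 := hlam_mem (-1) (by norm_num)
      rw [h] at h2
      simp at h2
    · exact h
  have hlam0 : lam ≠ 0 := hlam.ne'
  -- representation
  obtain ⟨G, hG, hGrep⟩ := aux_rep_functional gl
  -- instantiate at Q = 0
  have htr : -(c * gl (1 : Matrix (Fin d) (Fin d) ℂ)) ≤ S * lam := by
    have hi := hstar (fun _ => 0) (fun _ => Matrix.PosSemidef.zero)
    have hQ0 : (∑ _x : Fin k, (0 : Matrix (Fin d) (Fin d) ℂ)) = 0 := Finset.sum_const_zero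
    have hf0zero : f₀ (fun _ => (0 : Matrix (Fin d) (Fin d) ℂ)) = 0 := by
      simp only [hf₀]; simp
    rw [hQ0, zero_sub, map_neg, LinearMap.map_smul, hf0zero, zero_mul, add_zero, smul_eq_mul] at hi
    exact hi
  -- instantiate at single-coordinate rays
  have hray : ∀ (x : Fin k) (R : Matrix (Fin d) (Fin d) ℂ), R.PosSemidef →
      gl R + (k:ℝ)⁻¹ * ((ρ x * R).trace).re * lam ≤ 0 := by
    intro x R hR
    apply aux_helper2 (C := S * lam + c * gl (1 : Matrix (Fin d) (Fin d) ℂ))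
    intro t ht
    have hQdef : ∀ y : Fin k, (fun y => if y = x then t • R else 0) y
        = if y = x then t • R else 0 := fun _ => rfl
    have hQpsd : ∀ y : Fin k, ((fun y => if y = x then t • R else 0) y).PosSemidef := by
      intro y
      by_cases h : y = x
      · simpa [h] using aux_psd_smul_real ht.le hR
      · simpa [h] using Matrix.PosSemidef.zero
    have hi := hstar _ hQpsd
    have hsum : (∑ y, if y = x then t • R else 0) = t • R := by
      rw [Finset.sum_ite_eq' Finset.univ x fun _ => t • R]
      simp
    have hf0 : f₀ (fun y => if y = x then t • R else 0)
        = t * ((k:ℝ)⁻¹ * ((ρ x * R).trace).re) := by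
      simp only [hf₀]
      rw [Finset.sum_eq_single x]
      · rw [if_pos rfl, Matrix.mul_smul, Matrix.trace_smul, aux_re_real_smul]
        ring
      · intro y _ hy
        simp [hy]
      · intro h
        exact absurd (Finset.mem_univ x) h
    simp only at hi
    rw [hsum, hf0, map_sub, LinearMap.map_smul, LinearMap.map_smul] at hi
    simp only [smul_eq_mul] at hi
    have hexp : t * (gl R + (k:ℝ)⁻¹ * ((ρ x * R).trace).re * lam)
        = t * gl R + t * ((k:ℝ)⁻¹ * ((ρ x * R).trace).re) * lam := by ring
    rw [hexp]
    linarith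
  -- build P
  set P : Matrix (Fin d) (Fin d) ℂ := (-(k:ℝ)/lam) • G with hP
  have hPH : P.IsHermitian := aux_herm_real_smul _ hG
  have hPx : ∀ x, loewnerLE (ρ x) P := by
    intro x
    show (P - ρ x).PosSemidef
    refine aux_posSemidef_of_rtr (hPH.sub (hρ x).isHermitian) fun R hRp => ?_
    have h1 := hray x R hRp
    rw [← hGrep R hRp.isHermitian] at h1
    have h2 : ((P - ρ x) * R).trace.re
        = (-(k:ℝ)/lam) * ((G * R).trace).re - ((ρ x * R).trace).re := by
      rw [hP, Matrix.sub_mul, Matrix.trace_sub, Complex.sub_re, Matrix.smul_mul,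
        Matrix.trace_smul, aux_re_real_smul]
    rw [h2]
    have h3 : ((G * R).trace).re ≤ -((k:ℝ)⁻¹ * ((ρ x * R).trace).re * lam) := by linarith
    have h4 := mul_le_mul_of_nonpos_left h3
      (le_of_lt (by
        apply div_neg_of_neg_of_pos
        · exact neg_neg_of_pos (Nat.cast_pos.mpr hk)
        · exact hlam) : (-(k:ℝ)/lam) ≤ 0)
    have h5 : (-(k:ℝ)/lam) * (-((k:ℝ)⁻¹ * ((ρ x * R).trace).re * lam))
        = ((ρ x * R).trace).re := by
      field_simp
    rw [h5] at h4
    linarith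
  have hPtr : c * (k:ℝ)⁻¹ * P.trace.re ≤ S := by
    have hgl1 : ((G * 1).trace).re = gl 1 := hGrep 1 isHermitian_one
    rw [Matrix.mul_one] at hgl1
    have hPt : P.trace.re = (-(k:ℝ)/lam) * G.trace.re := by
      rw [hP, Matrix.trace_smul, aux_re_real_smul]
    rw [hPt]
    have he : c * (k:ℝ)⁻¹ * ((-(k:ℝ)/lam) * G.trace.re)
        = (1/lam) * (-(c * G.trace.re)) := by
      field_simp
    rw [he]
    have h6 : -(c * G.trace.re) ≤ S * lam := by
      rw [hgl1]; exact htr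
    calc (1/lam) * (-(c * G.trace.re)) ≤ (1/lam) * (S * lam) :=
          mul_le_mul_of_nonneg_left h6 (by positivity)
      _ = S := by field_simp
  exact ⟨P, hPH, hPx, hPtr⟩

end AuxDual

/-- operational interpretation of `q_re`: there is `η* ∈ [0,1)` such that
for every `η ∈ [η*,1)`, `q_re({ρ_x})` is the supremum over probability vectors `p` of
`P_succ^q(E,p,η) / P_succ^c(p,η)` with `P_succ^c(p,η) = (1-η) max_x p_x`, and the
supremum is attained at the uniform distribution. -/
theorem stmt12 {d k : ℕ} (hk : 0 < k)
    (ρ : Fin k → Matrix (Fin d) (Fin d) ℂ) (hρ : ∀ x, IsDensity (ρ x)) :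
    ∃ ηs : ℝ, ηs ∈ Set.Ico (0:ℝ) 1 ∧ ∀ η ∈ Set.Ico ηs 1,
      (∀ p : Fin k → ℝ, (∀ x, 0 < p x) → ∑ x, p x = 1 →
        Psucc ρ p η / ((1 - η) * (⨆ x, p x)) ≤ qre ρ) ∧
      Psucc ρ (fun _ => (k:ℝ)⁻¹) η / ((1 - η) * (⨆ _x : Fin k, ((k:ℝ)⁻¹))) = qre ρ := by
  classical
  refine ⟨0, ⟨le_refl 0, one_pos⟩, fun η hη => ?_⟩
  have hc : 0 < 1 - η := by linarith [hη.2]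
  have hρp : ∀ x, (ρ x).PosSemidef := fun x => (hρ x).1
  have hk0 : ((k:ℝ)) ≠ 0 := Nat.cast_ne_zero.mpr hk.ne'
  have hkpos : (0:ℝ) < (k:ℝ) := Nat.cast_pos.mpr hk
  haveI : Nonempty (Fin k) := ⟨⟨0, hk⟩⟩
  -- the dual feasible set
  set qset : Set ℝ := { t : ℝ | ∃ P : Matrix (Fin d) (Fin d) ℂ, P.IsHermitian ∧
    (∀ x, loewnerLE (ρ x) P) ∧ t = (P.trace).re } with hqset
  have hqre : qre ρ = sInf qset := rfl
  -- an explicit dual feasible point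
  set P₀ : Matrix (Fin d) (Fin d) ℂ := ∑ x, ρ x with hP₀
  have hP₀H : P₀.IsHermitian := (aux_psd_sum hρp).isHermitian
  have hP₀x : ∀ x, loewnerLE (ρ x) P₀ := by
    intro x
    show (P₀ - ρ x).PosSemidef
    have h1 : P₀ - ρ x = ∑ y ∈ Finset.univ.erase x, ρ y := by
      rw [hP₀, ← Finset.sum_erase_add Finset.univ ρ (Finset.mem_univ x), add_sub_cancel_right]
    rw [h1]
    exact aux_psd_sum hρp
  have ht₀ : (P₀.trace).re ∈ qset := ⟨P₀, hP₀H, hP₀x, rfl⟩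
  have hq_ne : qset.Nonempty := ⟨_, ht₀⟩
  have hq_bdd : BddBelow qset := by
    refine ⟨0, fun t ht => ?_⟩
    obtain ⟨P, hPH, hPx, rfl⟩ := ht
    have hPpsd : P.PosSemidef := by
      have h1 := (hPx ⟨0, hk⟩).add (hρp ⟨0, hk⟩)
      simpa using h1
    exact aux_psd_trace_re_nonneg hPpsd
  -- generic facts about the primal sets
  have hzero_mem : ∀ p : Fin k → ℝ,
      (0:ℝ) ∈ { s : ℝ | ∃ Q : Fin k → Matrix (Fin d) (Fin d) ℂ, (∀ x, (Q x).PosSemidef) ∧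
        loewnerLE (∑ x, Q x) (((1 - η : ℝ) : ℂ) • 1) ∧
        s = ∑ x, p x * ((ρ x * Q x).trace).re } := by
    intro p
    refine ⟨fun _ => 0, fun _ => Matrix.PosSemidef.zero, ?_, by simp⟩
    show ((((1 - η : ℝ)) : ℂ) • 1 - ∑ _x : Fin k, (0 : Matrix (Fin d) (Fin d) ℂ)).PosSemidef
    rw [Finset.sum_const_zero, sub_zero, ← aux_real_smul_matrix]
    exact aux_psd_smul_real hc.le Matrix.PosSemidef.one
  have hub : ∀ (p : Fin k → ℝ), (∀ x, 0 ≤ p x) → ∀ m : ℝ, (∀ x, p x ≤ m) →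
      ∀ s ∈ { s : ℝ | ∃ Q : Fin k → Matrix (Fin d) (Fin d) ℂ, (∀ x, (Q x).PosSemidef) ∧
        loewnerLE (∑ x, Q x) (((1 - η : ℝ) : ℂ) • 1) ∧
        s = ∑ x, p x * ((ρ x * Q x).trace).re },
      ∀ t ∈ qset, s ≤ (1 - η) * m * t := by
    rintro p hp m hm s ⟨Q, hQ, hle, rfl⟩ t ⟨P, hPH, hPx, rfl⟩
    exact aux_weak_dual hk hc hρp hp hm hQ hle hPx
  constructor
  · -- part (a)
    intro p hp hsum
    have hbr : BddAbove (Set.range p) := Set.Finite.bddAbove (Set.finite_range p)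
    have hm : ∀ x, p x ≤ ⨆ x, p x := fun x => le_ciSup hbr x
    have hm0 : 0 < ⨆ x, p x := lt_of_lt_of_le (hp ⟨0, hk⟩) (hm ⟨0, hk⟩)
    have hPs : Psucc ρ p η = sSup { s : ℝ | ∃ Q : Fin k → Matrix (Fin d) (Fin d) ℂ,
        (∀ x, (Q x).PosSemidef) ∧ loewnerLE (∑ x, Q x) (((1 - η : ℝ) : ℂ) • 1) ∧
        s = ∑ x, p x * ((ρ x * Q x).trace).re } := rfl
    rw [div_le_iff₀ (by positivity), hqre, hPs]
    refine csSup_le ⟨0, hzero_mem p⟩ fun s hs => ?_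
    have h1 : s / ((1 - η) * (⨆ x, p x)) ≤ sInf qset := by
      refine le_csInf hq_ne fun t ht => ?_
      rw [div_le_iff₀ (by positivity)]
      have := hub p (fun x => (hp x).le) _ hm s hs t ht
      linarith [this]
    rw [div_le_iff₀ (by positivity)] at h1
    linarith
  · -- part (b)
    have hus : (⨆ _x : Fin k, ((k:ℝ)⁻¹ : ℝ)) = (k:ℝ)⁻¹ := ciSup_const
    have hPs : Psucc ρ (fun _ => (k:ℝ)⁻¹) η
        = sSup { s : ℝ | ∃ Q : Fin k → Matrix (Fin d) (Fin d) ℂ,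
        (∀ x, (Q x).PosSemidef) ∧ loewnerLE (∑ x, Q x) (((1 - η : ℝ) : ℂ) • 1) ∧
        s = ∑ x, (k:ℝ)⁻¹ * ((ρ x * Q x).trace).re } := rfl
    have hbddU : BddAbove { s : ℝ | ∃ Q : Fin k → Matrix (Fin d) (Fin d) ℂ,
        (∀ x, (Q x).PosSemidef) ∧ loewnerLE (∑ x, Q x) (((1 - η : ℝ) : ℂ) • 1) ∧
        s = ∑ x, (k:ℝ)⁻¹ * ((ρ x * Q x).trace).re } := by
      refine ⟨(1 - η) * (k:ℝ)⁻¹ * (P₀.trace).re, fun s hs => ?_⟩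
      exact hub (fun _ => (k:ℝ)⁻¹) (fun _ => by positivity) ((k:ℝ)⁻¹)
        (fun _ => le_refl _) s hs _ ht₀
    obtain ⟨P, hPH, hPx, hPle⟩ := aux_strong_dual hk hc ρ hρp hbddU
    have hq_le : sInf qset ≤ (P.trace).re := csInf_le hq_bdd ⟨P, hPH, hPx, rfl⟩
    have hS_ge : (1 - η) * (k:ℝ)⁻¹ * sInf qset ≤ sSup { s : ℝ |
        ∃ Q : Fin k → Matrix (Fin d) (Fin d) ℂ,
        (∀ x, (Q x).PosSemidef) ∧ loewnerLE (∑ x, Q x) (((1 - η : ℝ) : ℂ) • 1) ∧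
        s = ∑ x, (k:ℝ)⁻¹ * ((ρ x * Q x).trace).re } := by
      refine le_trans ?_ hPle
      exact mul_le_mul_of_nonneg_left hq_le (by positivity)
    have hS_le : sSup { s : ℝ | ∃ Q : Fin k → Matrix (Fin d) (Fin d) ℂ,
        (∀ x, (Q x).PosSemidef) ∧ loewnerLE (∑ x, Q x) (((1 - η : ℝ) : ℂ) • 1) ∧
        s = ∑ x, (k:ℝ)⁻¹ * ((ρ x * Q x).trace).re }
        ≤ (1 - η) * (k:ℝ)⁻¹ * sInf qset := by
      refine csSup_le ⟨0, hzero_mem _⟩ fun s hs => ?_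
      have h1 : s / ((1 - η) * (k:ℝ)⁻¹) ≤ sInf qset := by
        refine le_csInf hq_ne fun t ht => ?_
        rw [div_le_iff₀ (by positivity)]
        have := hub (fun _ => (k:ℝ)⁻¹) (fun _ => by positivity) ((k:ℝ)⁻¹)
          (fun _ => le_refl _) s hs t ht
        linarith [this]
      rw [div_le_iff₀ (by positivity)] at h1
      linarith
    rw [hus, hqre, hPs, le_antisymm hS_le hS_ge]
    field_simp

end
end

section
/- Let α ∈ (1,2], and let ρ_1, σ_1 be density matrices on ℂ^{d_1} and ρ_2, σ_2 be density matrices on ℂ^{d_2}. Then the geometric Rényi divergence is additive under tensor products: D̂_α(ρ_1 ⊗ ρ_2 ‖ σ_1 ⊗ σ_2) = D̂_α(ρ_1‖σ_1) + D̂_α(ρ_2‖σ_2). -/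
open Matrix Filter
open scoped Kronecker Classical ComplexOrder

noncomputable section

section AuxProofs

open Polynomial

variable {n m : Type*} [Fintype n] [DecidableEq n] [Fintype m] [DecidableEq m]

private def conjAH (U : Matrix n n ℂ) (hU : U * Uᴴ = 1) :
    Matrix n n ℂ →ₐ[ℝ] Matrix n n ℂ where
  toFun X := U * X * Uᴴ
  map_one' := by show U * 1 * Uᴴ = 1; rw [mul_one, hU]
  map_mul' X Y := by
    have hU' : Uᴴ * U = 1 := mul_eq_one_comm.mp hU
    simp only [mul_assoc]
    rw [← mul_assoc Uᴴ U, hU', one_mul]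
  map_zero' := by simp
  map_add' X Y := by simp [Matrix.mul_add, Matrix.add_mul]
  commutes' r := by
    simp only [Algebra.algebraMap_eq_smul_one, mul_smul_comm, smul_mul_assoc, mul_one, hU]

private lemma aeval_conj (U M : Matrix n n ℂ) (hU : U * Uᴴ = 1) (p : ℝ[X]) :
    aeval (U * M * Uᴴ) p = U * aeval M p * Uᴴ :=
  aeval_algHom_apply (conjAH U hU) M p

private lemma aeval_diag (d : n → ℂ) (p : ℝ[X]) :
    aeval (Matrix.diagonal d) p = Matrix.diagonal (fun i => aeval (d i) p) := by
  have h1 := aeval_algHom_apply (Matrix.diagonalAlgHom (R := ℝ) (n := n) (α := ℂ)) d p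
  simp only [Matrix.diagonalAlgHom_apply] at h1
  rw [h1]
  exact Matrix.diagonal_eq_diagonal_iff.mpr fun i =>
    (aeval_algHom_apply (Pi.evalAlgHom ℝ (fun _ => ℂ) i) d p).symm

private lemma my_aeval_ofReal (x : ℝ) (p : ℝ[X]) :
    aeval ((x : ℝ) : ℂ) p = ((p.eval x : ℝ) : ℂ) := by
  have h1 := aeval_algHom_apply (Algebra.ofId ℝ ℂ) x p
  simp only [Algebra.ofId_apply, Complex.coe_algebraMap] at h1
  rw [h1, Polynomial.coe_aeval_eq_eval]

private lemma decomp_aeval {U : Matrix n n ℂ} (hU : U * Uᴴ = 1) (lam : n → ℝ) (p : ℝ[X]) :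
    aeval (U * Matrix.diagonal (fun i => ((lam i : ℝ) : ℂ)) * Uᴴ) p
      = U * Matrix.diagonal (fun i => ((p.eval (lam i) : ℝ) : ℂ)) * Uᴴ := by
  rw [aeval_conj _ _ hU, aeval_diag]
  rw [show (fun i => aeval ((lam i : ℝ) : ℂ) p) = fun i => ((p.eval (lam i) : ℝ) : ℂ) from
    funext fun i => my_aeval_ofReal _ p]

private lemma cfc_decomp {A : Matrix n n ℂ} (hA : A.IsHermitian) {U : Matrix n n ℂ}
    (hU : U * Uᴴ = 1) (lam : n → ℝ)
    (hdec : A = U * Matrix.diagonal (fun i => ((lam i : ℝ) : ℂ)) * Uᴴ) (f : ℝ → ℝ) :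
    hA.cfc f = U * Matrix.diagonal (fun i => ((f (lam i) : ℝ) : ℂ)) * Uᴴ := by
  classical
  set s : Finset ℝ := Finset.univ.image hA.eigenvalues ∪ Finset.univ.image lam with hs
  set p : ℝ[X] := Lagrange.interpolate s id f with hpdef
  have hinj : Set.InjOn id (s : Set ℝ) := Function.injective_id.injOn
  have hp : ∀ x ∈ s, p.eval x = f x := fun x hx => by
    exact Lagrange.eval_interpolate_at_node f hinj hx
  have hU0 : (hA.eigenvectorUnitary : Matrix n n ℂ) * (hA.eigenvectorUnitary : Matrix n n ℂ)ᴴ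
      = 1 := by
    rw [← Matrix.star_eq_conjTranspose]
    exact Matrix.mem_unitaryGroup_iff.mp hA.eigenvectorUnitary.2
  have hspec : A = (hA.eigenvectorUnitary : Matrix n n ℂ) *
      Matrix.diagonal (fun i => ((hA.eigenvalues i : ℝ) : ℂ)) *
      (hA.eigenvectorUnitary : Matrix n n ℂ)ᴴ := by
    conv_lhs => rw [hA.spectral_theorem]
    rw [Unitary.conjStarAlgAut_apply, Matrix.star_eq_conjTranspose]
    rfl
  have e1 : aeval A p = hA.cfc f := by
    conv_lhs => rw [hspec]
    rw [decomp_aeval hU0]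
    unfold Matrix.IsHermitian.cfc
    rw [Unitary.conjStarAlgAut_apply, Matrix.star_eq_conjTranspose]
    rw [show (fun i => ((p.eval (hA.eigenvalues i) : ℝ) : ℂ))
        = RCLike.ofReal ∘ f ∘ hA.eigenvalues from funext fun i => by
      rw [hp _ (hs ▸ Finset.mem_union_left _
        (Finset.mem_image_of_mem _ (Finset.mem_univ i)))]; rfl]
  have e2 : aeval A p = U * Matrix.diagonal (fun i => ((f (lam i) : ℝ) : ℂ)) * Uᴴ := by
    conv_lhs => rw [hdec]
    rw [decomp_aeval hU]
    rw [show (fun i => ((p.eval (lam i) : ℝ) : ℂ)) = fun i => ((f (lam i) : ℝ) : ℂ) from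
      funext fun i => by
        rw [hp _ (hs ▸ Finset.mem_union_right _
          (Finset.mem_image_of_mem _ (Finset.mem_univ i)))]]
  rw [← e1, e2]

private lemma cfc_congr' {A : Matrix n n ℂ} (hA : A.IsHermitian) {f g : ℝ → ℝ}
    (h : ∀ i, f (hA.eigenvalues i) = g (hA.eigenvalues i)) : hA.cfc f = hA.cfc g := by
  unfold Matrix.IsHermitian.cfc
  rw [show RCLike.ofReal ∘ f ∘ hA.eigenvalues = RCLike.ofReal ∘ g ∘ hA.eigenvalues from
    funext fun i => by simp [Function.comp_def, h i]]

private lemma cfc_mul' {A : Matrix n n ℂ} (hA : A.IsHermitian) (f g : ℝ → ℝ) :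
    hA.cfc f * hA.cfc g = hA.cfc (fun x => f x * g x) := by
  unfold Matrix.IsHermitian.cfc
  have h1 : star (hA.eigenvectorUnitary : Matrix n n ℂ) * (hA.eigenvectorUnitary : Matrix n n ℂ)
      = 1 := Matrix.UnitaryGroup.star_mul_self _
  simp only [Unitary.conjStarAlgAut_apply, Unitary.coe_star]
  simp only [mul_assoc]
  rw [← mul_assoc (star (hA.eigenvectorUnitary : Matrix n n ℂ))
    (hA.eigenvectorUnitary : Matrix n n ℂ), h1, one_mul,
    ← mul_assoc (Matrix.diagonal _) (Matrix.diagonal _), Matrix.diagonal_mul_diagonal]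
  rw [show (fun i => (RCLike.ofReal ∘ f ∘ hA.eigenvalues) i * (RCLike.ofReal ∘ g ∘ hA.eigenvalues) i)
      = RCLike.ofReal ∘ (fun x => f x * g x) ∘ hA.eigenvalues from
    funext fun i => by simp [Function.comp_def]]

private lemma cfc_identity {A : Matrix n n ℂ} (hA : A.IsHermitian) :
    hA.cfc (fun x => x) = A := by
  conv_rhs => rw [hA.spectral_theorem]
  rfl

private lemma cfc_herm {A : Matrix n n ℂ} (hA : A.IsHermitian) (f : ℝ → ℝ) :
    (hA.cfc f).IsHermitian := by
  unfold Matrix.IsHermitian.cfc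
  rw [Unitary.conjStarAlgAut_apply, Matrix.star_eq_conjTranspose]
  have hd : (Matrix.diagonal (RCLike.ofReal ∘ f ∘ hA.eigenvalues) : Matrix n n ℂ).IsHermitian := by
    rw [Matrix.IsHermitian, Matrix.diagonal_conjTranspose]
    exact Matrix.diagonal_eq_diagonal_iff.mpr fun i => by
      simp [Function.comp_def, RCLike.conj_ofReal]
  exact Matrix.isHermitian_mul_mul_conjTranspose _ hd

private lemma cfc_psd {A : Matrix n n ℂ} (hA : A.IsHermitian) {f : ℝ → ℝ}
    (hf : ∀ x, 0 ≤ f x) : (hA.cfc f).PosSemidef := by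
  unfold Matrix.IsHermitian.cfc
  rw [Unitary.conjStarAlgAut_apply, Matrix.star_eq_conjTranspose]
  exact (Matrix.posSemidef_diagonal_iff.mpr fun i => by
    simpa using Complex.zero_le_real.mpr (hf _)).mul_mul_conjTranspose_same _

private lemma herm_spec {A : Matrix n n ℂ} (hA : A.IsHermitian) :
    A = (hA.eigenvectorUnitary : Matrix n n ℂ) *
      Matrix.diagonal (fun i => ((hA.eigenvalues i : ℝ) : ℂ)) *
      (hA.eigenvectorUnitary : Matrix n n ℂ)ᴴ := by
  conv_lhs => rw [hA.spectral_theorem]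
  rw [Unitary.conjStarAlgAut_apply, Matrix.star_eq_conjTranspose]
  rfl

private lemma herm_unitary {A : Matrix n n ℂ} (hA : A.IsHermitian) :
    (hA.eigenvectorUnitary : Matrix n n ℂ) * (hA.eigenvectorUnitary : Matrix n n ℂ)ᴴ = 1 := by
  rw [← Matrix.star_eq_conjTranspose]
  exact Matrix.mem_unitaryGroup_iff.mp hA.eigenvectorUnitary.2

private lemma mpow_eq_cfc {A : Matrix n n ℂ} (hA : A.IsHermitian) (r : ℝ) :
    mpow A r = hA.cfc (fun x => if x = 0 then 0 else x ^ r) := by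
  unfold mpow
  rw [dif_pos hA]
  rfl

private lemma mpow_herm {A : Matrix n n ℂ} (hA : A.IsHermitian) (r : ℝ) :
    (mpow A r).IsHermitian := by
  rw [mpow_eq_cfc hA]; exact cfc_herm hA _

private lemma mpow_psd {A : Matrix n n ℂ} (hA : A.PosSemidef) (r : ℝ) :
    (mpow A r).PosSemidef := by
  have h : ∀ i, (if hA.1.eigenvalues i = 0 then (0:ℝ) else hA.1.eigenvalues i ^ r)
      = (if hA.1.eigenvalues i ≤ 0 then (0:ℝ) else hA.1.eigenvalues i ^ r) := by
    intro i
    rcases eq_or_lt_of_le (hA.eigenvalues_nonneg i) with h0 | h0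
    · simp [← h0]
    · rw [if_neg (ne_of_gt h0), if_neg (not_le.mpr h0)]
  rw [mpow_eq_cfc hA.1, cfc_congr' hA.1 (g := fun x => if x ≤ 0 then (0:ℝ) else x ^ r) h]
  refine cfc_psd hA.1 fun x => ?_
  split
  · exact le_refl 0
  · exact Real.rpow_nonneg (le_of_lt (not_le.mp (by assumption))) r

private lemma kron_ct (A : Matrix n n ℂ) (B : Matrix m m ℂ) : (A ⊗ₖ B)ᴴ = Aᴴ ⊗ₖ Bᴴ := by
  ext ⟨i, k⟩ ⟨j, l⟩
  simp [Matrix.conjTranspose_apply, Matrix.kroneckerMap_apply, mul_comm]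

private lemma kron_herm {A : Matrix n n ℂ} {B : Matrix m m ℂ}
    (hA : A.IsHermitian) (hB : B.IsHermitian) : (A ⊗ₖ B).IsHermitian := by
  show (A ⊗ₖ B)ᴴ = A ⊗ₖ B
  rw [kron_ct, hA.eq, hB.eq]

private lemma mpow_kron {A : Matrix n n ℂ} {B : Matrix m m ℂ}
    (hA : A.PosSemidef) (hB : B.PosSemidef) (r : ℝ) :
    mpow (A ⊗ₖ B) r = mpow A r ⊗ₖ mpow B r := by
  have hABh : (A ⊗ₖ B).IsHermitian := kron_herm hA.1 hB.1
  set U1 : Matrix n n ℂ := (hA.1.eigenvectorUnitary : Matrix n n ℂ) with hU1def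
  set U2 : Matrix m m ℂ := (hB.1.eigenvectorUnitary : Matrix m m ℂ) with hU2def
  have hU : (U1 ⊗ₖ U2) * (U1 ⊗ₖ U2)ᴴ = 1 := by
    rw [kron_ct, ← Matrix.mul_kronecker_mul, herm_unitary hA.1, herm_unitary hB.1,
      Matrix.one_kronecker_one]
  have hdec : A ⊗ₖ B = (U1 ⊗ₖ U2) *
      Matrix.diagonal (fun p : n × m =>
        (((hA.1.eigenvalues p.1 * hB.1.eigenvalues p.2 : ℝ)) : ℂ)) * (U1 ⊗ₖ U2)ᴴ := by
    conv_lhs => rw [herm_spec hA.1, herm_spec hB.1]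
    rw [Matrix.mul_kronecker_mul, Matrix.mul_kronecker_mul, Matrix.diagonal_kronecker_diagonal,
      ← kron_ct]
    rw [show (fun p : n × m => ((hA.1.eigenvalues p.1 : ℝ) : ℂ) * ((hB.1.eigenvalues p.2 : ℝ) : ℂ))
        = fun p : n × m => (((hA.1.eigenvalues p.1 * hB.1.eigenvalues p.2 : ℝ)) : ℂ) from
      funext fun p => (Complex.ofReal_mul _ _).symm]
  have key : ∀ p : n × m,
      (if hA.1.eigenvalues p.1 * hB.1.eigenvalues p.2 = 0 then (0:ℝ)
        else (hA.1.eigenvalues p.1 * hB.1.eigenvalues p.2) ^ r)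
      = (if hA.1.eigenvalues p.1 = 0 then (0:ℝ) else hA.1.eigenvalues p.1 ^ r)
        * (if hB.1.eigenvalues p.2 = 0 then (0:ℝ) else hB.1.eigenvalues p.2 ^ r) := by
    intro p
    by_cases ha0 : hA.1.eigenvalues p.1 = 0
    · simp [ha0]
    · by_cases hb0 : hB.1.eigenvalues p.2 = 0
      · simp [hb0]
      · rw [if_neg (mul_ne_zero ha0 hb0), if_neg ha0, if_neg hb0,
          Real.mul_rpow (hA.eigenvalues_nonneg p.1) (hB.eigenvalues_nonneg p.2)]
  rw [mpow_eq_cfc hABh, mpow_eq_cfc hA.1, mpow_eq_cfc hB.1,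
    cfc_decomp hABh hU _ hdec,
    cfc_decomp hA.1 (herm_unitary hA.1) hA.1.eigenvalues (herm_spec hA.1),
    cfc_decomp hB.1 (herm_unitary hB.1) hB.1.eigenvalues (herm_spec hB.1),
    Matrix.mul_kronecker_mul, Matrix.mul_kronecker_mul, Matrix.diagonal_kronecker_diagonal,
    ← kron_ct]
  rw [show (fun p : n × m =>
        (((if hA.1.eigenvalues p.1 = 0 then (0:ℝ) else hA.1.eigenvalues p.1 ^ r) : ℝ) : ℂ)
        * (((if hB.1.eigenvalues p.2 = 0 then (0:ℝ) else hB.1.eigenvalues p.2 ^ r) : ℝ) : ℂ))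
      = fun p : n × m =>
        (((if hA.1.eigenvalues p.1 * hB.1.eigenvalues p.2 = 0 then (0:ℝ)
          else (hA.1.eigenvalues p.1 * hB.1.eigenvalues p.2) ^ r) : ℝ) : ℂ) from
    funext fun p => by rw [key p, Complex.ofReal_mul]]

private lemma mpow_mul_mpow {A : Matrix n n ℂ} (hA : A.PosSemidef) (r s : ℝ) :
    mpow A r * mpow A s = mpow A (r + s) := by
  rw [mpow_eq_cfc hA.1 r, mpow_eq_cfc hA.1 s, mpow_eq_cfc hA.1 (r + s), cfc_mul' hA.1]
  exact cfc_congr' hA.1 fun i => by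
    rcases eq_or_lt_of_le (hA.eigenvalues_nonneg i) with h | h
    · simp [← h]
    · simp only [if_neg (ne_of_gt h), ← Real.rpow_add h]

private lemma mpow_one' {A : Matrix n n ℂ} (hA : A.IsHermitian) : mpow A 1 = A := by
  rw [mpow_eq_cfc hA,
    cfc_congr' hA (g := fun x => x) (fun i => by
      by_cases h : hA.eigenvalues i = 0 <;> simp [h, Real.rpow_one])]
  exact cfc_identity hA

private lemma proj_mul_self {σ : Matrix n n ℂ} (hσ : σ.IsHermitian) :
    mpow σ 0 * σ = σ := by
  calc mpow σ 0 * σ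
      = hσ.cfc (fun x => if x = 0 then 0 else x ^ (0:ℝ)) * hσ.cfc (fun x => x) := by
        rw [mpow_eq_cfc hσ, cfc_identity hσ]
    _ = hσ.cfc (fun x => (if x = 0 then 0 else x ^ (0:ℝ)) * x) := cfc_mul' hσ _ _
    _ = hσ.cfc (fun x => x) := cfc_congr' hσ fun i => by
        by_cases h : hσ.eigenvalues i = 0 <;> simp [h, Real.rpow_zero]
    _ = σ := cfc_identity hσ

private lemma proj_idem {σ : Matrix n n ℂ} (hσ : σ.IsHermitian) :
    mpow σ 0 * mpow σ 0 = mpow σ 0 := by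
  rw [mpow_eq_cfc hσ, cfc_mul' hσ]
  exact cfc_congr' hσ fun i => by
    by_cases h : hσ.eigenvalues i = 0 <;> simp [h, Real.rpow_zero]

private lemma proj_eq_mul {σ : Matrix n n ℂ} (hσ : σ.IsHermitian) :
    ∃ G, σ * G = mpow σ 0 := by
  refine ⟨hσ.cfc (fun x => if x = 0 then 0 else x⁻¹), ?_⟩
  calc σ * hσ.cfc (fun x => if x = 0 then 0 else x⁻¹)
      = hσ.cfc (fun x => x) * hσ.cfc (fun x => if x = 0 then 0 else x⁻¹) := by
        rw [cfc_identity hσ]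
    _ = hσ.cfc (fun x => x * (if x = 0 then 0 else x⁻¹)) := cfc_mul' hσ _ _
    _ = mpow σ 0 := by
        rw [mpow_eq_cfc hσ]
        exact cfc_congr' hσ fun i => by
          by_cases h : hσ.eigenvalues i = 0
          · simp [h]
          · simp [h, Real.rpow_zero, mul_inv_cancel₀ h]

private lemma suppLE_iff_proj {ρ σ : Matrix n n ℂ} (hσ : σ.IsHermitian) :
    suppLE ρ σ ↔ mpow σ 0 * ρ = ρ := by
  obtain ⟨G, hG⟩ := proj_eq_mul hσ
  have hrange : LinearMap.range (mpow σ 0).mulVecLin = LinearMap.range σ.mulVecLin := by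
    apply le_antisymm
    · rw [← hG, Matrix.mulVecLin_mul]
      exact LinearMap.range_comp_le_range _ _
    · conv_lhs => rw [← proj_mul_self hσ]
      rw [Matrix.mulVecLin_mul]
      exact LinearMap.range_comp_le_range _ _
  constructor
  · intro h
    have hfix : ∀ x ∈ LinearMap.range σ.mulVecLin, (mpow σ 0) *ᵥ x = x := by
      rw [← hrange]
      rintro x ⟨v, rfl⟩
      rw [Matrix.mulVecLin_apply, Matrix.mulVec_mulVec, proj_idem hσ]
    ext i j
    have h2 : (mpow σ 0 * ρ) *ᵥ (Pi.single j 1) = ρ *ᵥ (Pi.single j 1) := by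
      rw [← Matrix.mulVec_mulVec]
      exact hfix _ (h ⟨Pi.single j 1, rfl⟩)
    have h3 := congrFun h2 i
    simpa [Matrix.mulVec_single] using h3
  · intro h
    rintro x ⟨v, rfl⟩
    rw [← hrange]
    exact ⟨ρ *ᵥ v, by rw [Matrix.mulVecLin_apply, Matrix.mulVec_mulVec, h]; rfl⟩

private lemma psd_ne_zero {ρ : Matrix n n ℂ} (h : ρ.trace = 1) : ρ ≠ 0 := fun h0 => by
  rw [h0, Matrix.trace_zero] at h
  exact zero_ne_one h

private lemma suppLE_kron_iff {ρ1 σ1 : Matrix n n ℂ} {ρ2 σ2 : Matrix m m ℂ}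
    (hρ1 : ρ1.PosSemidef) (ht1 : ρ1.trace = 1) (hσ1 : σ1.PosSemidef)
    (hρ2 : ρ2.PosSemidef) (ht2 : ρ2.trace = 1) (hσ2 : σ2.PosSemidef) :
    suppLE (ρ1 ⊗ₖ ρ2) (σ1 ⊗ₖ σ2) ↔ (suppLE ρ1 σ1 ∧ suppLE ρ2 σ2) := by
  rw [suppLE_iff_proj hσ1.1, suppLE_iff_proj hσ2.1,
    suppLE_iff_proj (kron_herm hσ1.1 hσ2.1), mpow_kron hσ1 hσ2, ← Matrix.mul_kronecker_mul]
  constructor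
  · intro h
    have e : ∀ (p q : n × m), ((mpow σ1 0 * ρ1) ⊗ₖ (mpow σ2 0 * ρ2)) p q = (ρ1 ⊗ₖ ρ2) p q :=
      fun p q => by rw [h]
    constructor
    · have h1 : ∀ i j, (mpow σ1 0 * ρ1) i j * (mpow σ2 0 * ρ2).trace = ρ1 i j := by
        intro i j
        calc (mpow σ1 0 * ρ1) i j * (mpow σ2 0 * ρ2).trace
            = ∑ k, ((mpow σ1 0 * ρ1) ⊗ₖ (mpow σ2 0 * ρ2)) (i, k) (j, k) := by
              simp [Matrix.trace, Matrix.kroneckerMap_apply, Finset.mul_sum, Matrix.diag]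
          _ = ∑ k, (ρ1 ⊗ₖ ρ2) (i, k) (j, k) := by simp only [e]
          _ = ρ1 i j * ρ2.trace := by
              simp [Matrix.trace, Matrix.kroneckerMap_apply, Finset.mul_sum, Matrix.diag]
          _ = ρ1 i j := by rw [ht2, mul_one]
      have hmeq : (mpow σ2 0 * ρ2).trace • (mpow σ1 0 * ρ1) = ρ1 := by
        ext i j
        rw [Matrix.smul_apply, smul_eq_mul, mul_comm]
        exact h1 i j
      calc mpow σ1 0 * ρ1
          = mpow σ1 0 * ((mpow σ2 0 * ρ2).trace • (mpow σ1 0 * ρ1)) := by rw [hmeq]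
        _ = (mpow σ2 0 * ρ2).trace • (mpow σ1 0 * mpow σ1 0 * ρ1) := by
            rw [Matrix.mul_smul, mul_assoc]
        _ = (mpow σ2 0 * ρ2).trace • (mpow σ1 0 * ρ1) := by rw [proj_idem hσ1.1]
        _ = ρ1 := hmeq
    · have h1 : ∀ k l, (mpow σ2 0 * ρ2) k l * (mpow σ1 0 * ρ1).trace = ρ2 k l := by
        intro k l
        calc (mpow σ2 0 * ρ2) k l * (mpow σ1 0 * ρ1).trace
            = ∑ i, ((mpow σ1 0 * ρ1) ⊗ₖ (mpow σ2 0 * ρ2)) (i, k) (i, l) := by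
              simp [Matrix.trace, Matrix.kroneckerMap_apply, Finset.mul_sum, Matrix.diag,
                mul_comm]
          _ = ∑ i, (ρ1 ⊗ₖ ρ2) (i, k) (i, l) := by simp only [e]
          _ = ρ2 k l * ρ1.trace := by
              simp [Matrix.trace, Matrix.kroneckerMap_apply, Finset.mul_sum, Matrix.diag,
                mul_comm]
          _ = ρ2 k l := by rw [ht1, mul_one]
      have hmeq : (mpow σ1 0 * ρ1).trace • (mpow σ2 0 * ρ2) = ρ2 := by
        ext k l
        rw [Matrix.smul_apply, smul_eq_mul, mul_comm]
        exact h1 k l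
      calc mpow σ2 0 * ρ2
          = mpow σ2 0 * ((mpow σ1 0 * ρ1).trace • (mpow σ2 0 * ρ2)) := by rw [hmeq]
        _ = (mpow σ1 0 * ρ1).trace • (mpow σ2 0 * mpow σ2 0 * ρ2) := by
            rw [Matrix.mul_smul, mul_assoc]
        _ = (mpow σ1 0 * ρ1).trace • (mpow σ2 0 * ρ2) := by rw [proj_idem hσ2.1]
        _ = ρ2 := hmeq
  · rintro ⟨h1, h2⟩
    rw [h1, h2]

open scoped MatrixOrder in
private lemma psd_trace {M : Matrix n n ℂ} (hM : M.PosSemidef) :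
    ∃ t : ℝ, 0 ≤ t ∧ M.trace = (t : ℂ) ∧ (t = 0 → M = 0) := by
  obtain ⟨B, hB⟩ := CStarAlgebra.nonneg_iff_eq_star_mul_self.mp hM.nonneg
  rw [Matrix.star_eq_conjTranspose] at hB
  subst hB
  refine ⟨∑ i, ∑ j, Complex.normSq (B j i),
    Finset.sum_nonneg fun i _ => Finset.sum_nonneg fun j _ => Complex.normSq_nonneg _, ?_, ?_⟩
  · rw [Matrix.trace]
    push_cast
    refine Finset.sum_congr rfl fun i _ => ?_
    simp only [Matrix.diag, Matrix.mul_apply, Matrix.conjTranspose_apply]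
    refine Finset.sum_congr rfl fun j _ => ?_
    rw [Complex.star_def, Complex.normSq_eq_conj_mul_self]
  · intro ht
    have h0 : ∀ i ∈ Finset.univ, (∑ j, Complex.normSq (B j i)) = 0 :=
      (Finset.sum_eq_zero_iff_of_nonneg fun i _ =>
        Finset.sum_nonneg fun j _ => Complex.normSq_nonneg _).mp ht
    have hz : B = 0 := by
      ext j i
      have := (Finset.sum_eq_zero_iff_of_nonneg fun j _ => Complex.normSq_nonneg _).mp
        (h0 i (Finset.mem_univ i)) j (Finset.mem_univ j)
      simpa using Complex.normSq_eq_zero.mp this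
    rw [hz]
    simp

private lemma X_psd {ρ σ : Matrix n n ℂ} (hρ : ρ.PosSemidef) (hσ : σ.PosSemidef) :
    (mpow σ (-(1/2)) * ρ * mpow σ (-(1/2))).PosSemidef := by
  rw [show mpow σ (-(1/2)) * ρ * mpow σ (-(1/2))
      = (mpow σ (-(1/2)))ᴴ * ρ * mpow σ (-(1/2)) by rw [(mpow_herm hσ.1 _).eq]]
  exact hρ.conjTranspose_mul_mul_same _

private lemma geom_trace_pos {ρ σ : Matrix n n ℂ} (hρ : ρ.PosSemidef) (hσ : σ.PosSemidef)
    (hρt : ρ.trace = 1) (hsupp : suppLE ρ σ) (α : ℝ) :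
    ∃ t : ℝ, 0 < t ∧
      (σ * mpow (mpow σ (-(1/2)) * ρ * mpow σ (-(1/2))) α).trace = (t : ℂ) := by
  set S := mpow σ (-(1/2)) with hSdef
  set X := S * ρ * S with hXdef
  have hX : X.PosSemidef := X_psd hρ hσ
  set Y := mpow X α with hYdef
  have hY : Y.PosSemidef := mpow_psd hX _
  set R := mpow σ (1/2) with hRdef
  have hR : R.IsHermitian := mpow_herm hσ.1 _
  have hRR : R * R = σ := by
    rw [hRdef, mpow_mul_mpow hσ, show (1/2 + 1/2 : ℝ) = 1 by norm_num, mpow_one' hσ.1]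
  have hRS : R * S = mpow σ 0 := by
    rw [hRdef, hSdef, mpow_mul_mpow hσ, show (1/2 + -(1/2) : ℝ) = 0 by norm_num]
  have hSR : S * R = mpow σ 0 := by
    rw [hRdef, hSdef, mpow_mul_mpow hσ, show (-(1/2) + 1/2 : ℝ) = 0 by norm_num]
  have hM : (R * Y * R).PosSemidef := by
    rw [show R * Y * R = Rᴴ * Y * R by rw [hR.eq]]
    exact hY.conjTranspose_mul_mul_same R
  obtain ⟨t, ht0, htr, hz⟩ := psd_trace hM
  have htrace : (σ * Y).trace = (R * Y * R).trace := by
    rw [← hRR, mul_assoc, Matrix.trace_mul_comm R (R * Y), mul_assoc]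
  refine ⟨t, ?_, by rw [htrace, htr]⟩
  rcases eq_or_lt_of_le ht0 with h0 | hpos
  · exfalso
    have hM0 : R * Y * R = 0 := hz h0.symm
    set Z := mpow X (α/2) with hZdef
    have hZ : Z.IsHermitian := mpow_herm hX.1 _
    have hZZ : Z * Z = Y := by
      rw [hZdef, mpow_mul_mpow hX, show (α/2 + α/2 : ℝ) = α by ring, hYdef]
    have hZR : Z * R = 0 := by
      apply Matrix.conjTranspose_mul_self_eq_zero.mp
      rw [Matrix.conjTranspose_mul, hZ.eq, hR.eq]
      calc R * Z * (Z * R) = R * (Z * Z) * R := by simp only [mul_assoc]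
        _ = R * Y * R := by rw [hZZ]
        _ = 0 := hM0
    have hXR : X * R = 0 := by
      have hGZ : mpow X (1 - α/2) * Z = X := by
        rw [hZdef, mpow_mul_mpow hX, show (1 - α/2 + α/2 : ℝ) = 1 by ring, mpow_one' hX.1]
      calc X * R = mpow X (1 - α/2) * (Z * R) := by rw [← mul_assoc, hGZ]
        _ = 0 := by rw [hZR, mul_zero]
    have hPρP : mpow σ 0 * ρ * mpow σ 0 = 0 := by
      have hRXR : R * X * R = 0 := by rw [mul_assoc, hXR, mul_zero]
      calc mpow σ 0 * ρ * mpow σ 0 = (R * S) * ρ * (S * R) := by rw [hRS, hSR]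
        _ = R * X * R := by rw [hXdef]; simp only [mul_assoc]
        _ = 0 := hRXR
    have hPρ : mpow σ 0 * ρ = ρ := (suppLE_iff_proj hσ.1).mp hsupp
    have hρP : ρ * mpow σ 0 = ρ := by
      have hct := congrArg Matrix.conjTranspose hPρ
      rwa [Matrix.conjTranspose_mul, hρ.1.eq, (mpow_herm hσ.1 0).eq] at hct
    rw [hPρ, hρP] at hPρP
    exact psd_ne_zero hρt hPρP
  · exact hpos

private lemma geomReal_add {ρ1 σ1 : Matrix n n ℂ} {ρ2 σ2 : Matrix m m ℂ} (α : ℝ)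
    (hρ1 : IsDensity ρ1) (hσ1 : IsDensity σ1) (hρ2 : IsDensity ρ2) (hσ2 : IsDensity σ2)
    (h1 : suppLE ρ1 σ1) (h2 : suppLE ρ2 σ2) :
    geomRenyiReal α (ρ1 ⊗ₖ ρ2) (σ1 ⊗ₖ σ2)
      = geomRenyiReal α ρ1 σ1 + geomRenyiReal α ρ2 σ2 := by
  obtain ⟨t1, ht1, htr1⟩ := geom_trace_pos hρ1.1 hσ1.1 hρ1.2 h1 α
  obtain ⟨t2, ht2, htr2⟩ := geom_trace_pos hρ2.1 hσ2.1 hρ2.2 h2 α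
  have hkey : (σ1 ⊗ₖ σ2) *
        mpow (mpow (σ1 ⊗ₖ σ2) (-(1/2)) * (ρ1 ⊗ₖ ρ2) * mpow (σ1 ⊗ₖ σ2) (-(1/2))) α
      = (σ1 * mpow (mpow σ1 (-(1/2)) * ρ1 * mpow σ1 (-(1/2))) α)
        ⊗ₖ (σ2 * mpow (mpow σ2 (-(1/2)) * ρ2 * mpow σ2 (-(1/2))) α) := by
    rw [mpow_kron hσ1.1 hσ2.1, ← Matrix.mul_kronecker_mul, ← Matrix.mul_kronecker_mul,
      mpow_kron (X_psd hρ1.1 hσ1.1) (X_psd hρ2.1 hσ2.1), ← Matrix.mul_kronecker_mul]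
  unfold geomRenyiReal
  rw [hkey, Matrix.trace_kronecker, htr1, htr2, ← Complex.ofReal_mul, Complex.ofReal_re,
    Complex.ofReal_re, Complex.ofReal_re,
    Real.log_mul (ne_of_gt ht1) (ne_of_gt ht2), mul_add]

end AuxProofs

/-- additivity of the geometric Rényi divergence under tensor products. -/
theorem stmt14 {d1 d2 : ℕ} (α : ℝ) (hα : 1 < α) (hα2 : α ≤ 2)
    (ρ1 σ1 : Matrix (Fin d1) (Fin d1) ℂ) (ρ2 σ2 : Matrix (Fin d2) (Fin d2) ℂ)
    (hρ1 : IsDensity ρ1) (hσ1 : IsDensity σ1) (hρ2 : IsDensity ρ2) (hσ2 : IsDensity σ2) :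
    geomRenyi α (ρ1 ⊗ₖ ρ2) (σ1 ⊗ₖ σ2) = geomRenyi α ρ1 σ1 + geomRenyi α ρ2 σ2 := by
  have hk := suppLE_kron_iff hρ1.1 hρ1.2 hσ1.1 hρ2.1 hρ2.2 hσ2.1
  by_cases h1 : suppLE ρ1 σ1
  · by_cases h2 : suppLE ρ2 σ2
    · have h12 := hk.mpr ⟨h1, h2⟩
      simp only [geomRenyi, if_pos h12, if_pos h1, if_pos h2]
      rw [geomReal_add α hρ1 hσ1 hρ2 hσ2 h1 h2, EReal.coe_add]
    · have h12 : ¬ suppLE (ρ1 ⊗ₖ ρ2) (σ1 ⊗ₖ σ2) := fun h => h2 (hk.mp h).2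
      simp only [geomRenyi, if_neg h12, if_pos h1, if_neg h2]
      exact (EReal.coe_add_top _).symm
  · have h12 : ¬ suppLE (ρ1 ⊗ₖ ρ2) (σ1 ⊗ₖ σ2) := fun h => h1 (hk.mp h).1
    by_cases h2 : suppLE ρ2 σ2
    · simp only [geomRenyi, if_neg h12, if_neg h1, if_pos h2]
      exact (EReal.top_add_coe _).symm
    · simp only [geomRenyi, if_neg h12, if_neg h1, if_neg h2]
      exact EReal.top_add_top.symm

end
end
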